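/- arXiv:2405.19353 — 9 statements merged into one kernel-verified Lean document; each statement's English description precedes it below -/
import Mathlib

section
/- Let v_{j,i} = V_j R^i u_{θ_j} (j = 1,…,4, i = 0,1,2) be the 12-point configurations of Theorem (isoclinicMercedes), where R is the rotation of ℝ² by 2π/3, u_θ = (cos θ, sin θ), and V₁,…,V₄ ∈ ℝ^{4×2} are given by [V₁,V₂,V₃,V₄] = (1/√6)·[[√6,0,√2,0,√2,0,√2,0],[0,√6,0,√2,0,√2,0,√2],[0,0,-2,0,1,-√3,1,√3],[0,0,0,-2,√3,1,-√3,1]]. Then: (i) for all θ₁,…,θ₄ ∈ ℝ and all indices with j ≠ k, |⟨v_{j,i}, v_{k,i'}⟩| ≤ 1/√3; and (ii) for every s ∈ [0, 1/√3] there exist θ₁,…,θ₄ ∈ ℝ, indices j ≠ k and i, i' ∈ {0,1,2} such that |⟨v_{j,i}, v_{k,i'}⟩| = s. Hence the cross-plane angle |⟨v_j,v_k⟩| can take any value in the interval [0, 1/√3]. -/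
open Real Matrix

/-- The rotation of `ℝ²` by angle `2π/3`. -/
noncomputable def R : Matrix (Fin 2) (Fin 2) ℝ :=
  !![-1/2, -Real.sqrt 3 / 2; Real.sqrt 3 / 2, -1/2]

/-- The four `4×2` matrices `V₁,V₂,V₃,V₄` whose columns are orthonormal and span
four equi-isoclinic planes in `ℝ⁴`. -/
noncomputable def V : Fin 4 → Matrix (Fin 4) (Fin 2) ℝ :=
  ![(1 / Real.sqrt 6) • !![Real.sqrt 6, 0; 0, Real.sqrt 6; 0, 0; 0, 0],
    (1 / Real.sqrt 6) • !![Real.sqrt 2, 0; 0, Real.sqrt 2; -2, 0; 0, -2],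
    (1 / Real.sqrt 6) • !![Real.sqrt 2, 0; 0, Real.sqrt 2; 1, -Real.sqrt 3; Real.sqrt 3, 1],
    (1 / Real.sqrt 6) • !![Real.sqrt 2, 0; 0, Real.sqrt 2; 1, Real.sqrt 3; -Real.sqrt 3, 1]]

/-- The unit vector `u_θ = (cos θ, sin θ)` in `ℝ²`. -/
noncomputable def u (θ : ℝ) : Fin 2 → ℝ := ![Real.cos θ, Real.sin θ]

/-- The twelve vectors `v_{j,i} = V_j R^i u_{θ_j}` of four Mercedes-Benz frames lying
on the four equi-isoclinic planes. -/
noncomputable def v (θ : Fin 4 → ℝ) (j : Fin 4) (i : Fin 3) : Fin 4 → ℝ :=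
  (V j).mulVec ((R ^ (i : ℕ)).mulVec (u (θ j)))

lemma dot_mulVecL {m n : Type*} [Fintype m] [Fintype n] (M : Matrix m n ℝ) (x : n → ℝ) (y : m → ℝ) :
    M.mulVec x ⬝ᵥ y = x ⬝ᵥ Mᵀ.mulVec y := by
  rw [dotProduct_comm, Matrix.dotProduct_mulVec, ← Matrix.mulVec_transpose,
    dotProduct_comm]

lemma R_orth : Rᵀ * R = 1 := by
  have h3 : Real.sqrt 3 * Real.sqrt 3 = 3 := Real.mul_self_sqrt (by norm_num)
  ext i j
  fin_cases i <;> fin_cases j <;>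
    simp [R, Matrix.mul_apply, Fin.sum_univ_two, Matrix.one_apply, Matrix.transpose_apply,
      Matrix.vecHead, Matrix.vecTail] <;> nlinarith [h3]

lemma Rpow_orth (n : ℕ) : (R ^ n)ᵀ * R ^ n = 1 := by
  induction n with
  | zero => simp
  | succ n ih =>
    rw [pow_succ, Matrix.transpose_mul, mul_assoc, ← mul_assoc ((R^n)ᵀ), ih, one_mul, R_orth]

lemma unit_vec (n : ℕ) (θ : ℝ) :
    (R ^ n).mulVec (u θ) ⬝ᵥ (R ^ n).mulVec (u θ) = 1 := by
  rw [dot_mulVecL, Matrix.mulVec_mulVec, Rpow_orth, Matrix.one_mulVec]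
  simp [u, dotProduct, Fin.sum_univ_two]
  nlinarith [Real.sin_sq_add_cos_sq θ]

lemma key (G : Matrix (Fin 2) (Fin 2) ℝ) (hG : Gᵀ * G = (3:ℝ)⁻¹ • 1)
    (a b : Fin 2 → ℝ) (ha : a ⬝ᵥ a = 1) (hb : b ⬝ᵥ b = 1) :
    |a ⬝ᵥ G.mulVec b| ≤ 1 / Real.sqrt 3 := by
  have hz : G.mulVec b ⬝ᵥ G.mulVec b = 3⁻¹ := by
    rw [dot_mulVecL, Matrix.mulVec_mulVec, hG, Matrix.smul_mulVec, Matrix.one_mulVec,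
      dotProduct_smul, hb]
    simp
  set z := G.mulVec b with hzdef
  have cs : (a ⬝ᵥ z) ^ 2 ≤ 3⁻¹ := by
    simp only [dotProduct, Fin.sum_univ_two] at ha hz ⊢
    nlinarith [sq_nonneg (a 0 * z 1 - a 1 * z 0)]
  calc |a ⬝ᵥ z| = Real.sqrt ((a ⬝ᵥ z) ^ 2) := (Real.sqrt_sq_eq_abs _).symm
    _ ≤ Real.sqrt 3⁻¹ := Real.sqrt_le_sqrt cs
    _ = 1 / Real.sqrt 3 := by rw [Real.sqrt_inv, one_div]

set_option maxHeartbeats 3200000 in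
lemma gram (j k : Fin 4) (h : j ≠ k) :
    ((V j)ᵀ * V k)ᵀ * ((V j)ᵀ * V k) = (3:ℝ)⁻¹ • 1 := by
  have h2 : Real.sqrt 2 * Real.sqrt 2 = 2 := Real.mul_self_sqrt (by norm_num)
  have h3 : Real.sqrt 3 * Real.sqrt 3 = 3 := Real.mul_self_sqrt (by norm_num)
  have h6 : Real.sqrt 6 * Real.sqrt 6 = 6 := Real.mul_self_sqrt (by norm_num)
  have h6p : (0:ℝ) < Real.sqrt 6 := Real.sqrt_pos.2 (by norm_num)
  fin_cases j <;> fin_cases k <;>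
  first
  | exact absurd rfl h
  | (ext a b
     fin_cases a <;> fin_cases b <;>
      (simp [V, Matrix.mul_apply, Fin.sum_univ_two, Fin.sum_univ_four, Matrix.one_apply,
        Matrix.transpose_apply, Matrix.vecHead, Matrix.vecTail, Matrix.smul_apply] <;>
       field_simp <;>
       nlinarith [h2, h3, h6, sq_nonneg (Real.sqrt 2 * Real.sqrt 6 - 2 * Real.sqrt 3),
         sq_nonneg (Real.sqrt 3 * Real.sqrt 6)]))

/-- For the `12`-point spherical `(2,2)`-designs `v_{j,i} = V_j R^i u_{θ_j}` for `ℝ⁴`, the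
cross-plane angle `|⟨v_{j,i}, v_{k,i'}⟩|` (`j ≠ k`) is at most `1/√3`, and it takes every
value in the interval `[0, 1/√3]` over all choices of `θ₁,…,θ₄` and of indices. -/
theorem crossplane_angles :
    (∀ θ : Fin 4 → ℝ, ∀ j k : Fin 4, j ≠ k → ∀ i i' : Fin 3,
      |∑ l, v θ j i l * v θ k i' l| ≤ 1 / Real.sqrt 3) ∧
    (∀ s ∈ Set.Icc (0 : ℝ) (1 / Real.sqrt 3),
      ∃ θ : Fin 4 → ℝ, ∃ j k : Fin 4, j ≠ k ∧ ∃ i i' : Fin 3,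
        |∑ l, v θ j i l * v θ k i' l| = s) := by
  constructor
  · intro θ j k hjk i i'
    have hsum : ∑ l, v θ j i l * v θ k i' l
        = ((R ^ (i:ℕ)).mulVec (u (θ j))) ⬝ᵥ ((V j)ᵀ * V k).mulVec ((R ^ (i':ℕ)).mulVec (u (θ k))) := by
      show v θ j i ⬝ᵥ v θ k i' = _
      rw [v, v, dot_mulVecL, Matrix.mulVec_mulVec]
    rw [hsum]
    exact key _ (gram j k hjk) _ _ (unit_vec _ _) (unit_vec _ _)
  · rintro s ⟨hs0, hs1⟩
    have h3 : Real.sqrt 3 * Real.sqrt 3 = 3 := Real.mul_self_sqrt (by norm_num)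
    have h3p : (0:ℝ) < Real.sqrt 3 := Real.sqrt_pos.2 (by norm_num)
    have h6p : (0:ℝ) < Real.sqrt 6 := Real.sqrt_pos.2 (by norm_num)
    have hs3 : s * Real.sqrt 3 ∈ Set.Icc (-1 : ℝ) 1 := by
      constructor
      · nlinarith
      · have h1 : (1 / Real.sqrt 3) * Real.sqrt 3 = 1 := by field_simp
        nlinarith [mul_le_mul_of_nonneg_right hs1 h3p.le]
    refine ⟨![Real.arccos (s * Real.sqrt 3), 0, 0, 0], 0, 1, by decide, 0, 0, ?_⟩
    have hcos : Real.cos (Real.arccos (s * Real.sqrt 3)) = s * Real.sqrt 3 :=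
      Real.cos_arccos hs3.1 hs3.2
    have h26 : Real.sqrt 2 * Real.sqrt 3 = Real.sqrt 6 := by
      rw [← Real.sqrt_mul (by norm_num : (2:ℝ) ≥ 0)]; norm_num
    have : ∑ l, v ![Real.arccos (s * Real.sqrt 3), 0, 0, 0] 0 0 l
        * v ![Real.arccos (s * Real.sqrt 3), 0, 0, 0] 1 0 l = s := by
      simp [v, V, u, Matrix.mulVec, dotProduct, Fin.sum_univ_two, Fin.sum_univ_four,
        Matrix.vecHead, Matrix.vecTail, hcos, pow_zero, Matrix.one_mulVec]
      field_simp
      nlinarith [h3, h26, Real.sq_sqrt (by norm_num : (2:ℝ) ≥ 0), Real.sq_sqrt (by norm_num : (6:ℝ) ≥ 0)]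
    rw [this, abs_of_nonneg hs0]
end

section
/- The following polynomial identity holds in ℝ[x,y,z] (Reznick's formula): 540·(x² + y² + z²)³ = 378x⁶ + 378y⁶ + 280z⁶ + (√3·x + 2z)⁶ + (√3·x − 2z)⁶ + (√3·y + 2z)⁶ + (√3·y − 2z)⁶ + (√3·x + √3·y + z)⁶ + (√3·x − √3·y + z)⁶ + (√3·x + √3·y − z)⁶ + (√3·x − √3·y − z)⁶. -/
open Real

/-- Reznick's formula: the ternary sextic identity
`540(x²+y²+z²)³ = 378x⁶ + 378y⁶ + 280z⁶ + (√3x+2z)⁶ + (√3x−2z)⁶ + (√3y+2z)⁶ + (√3y−2z)⁶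
 + (√3x+√3y+z)⁶ + (√3x−√3y+z)⁶ + (√3x+√3y−z)⁶ + (√3x−√3y−z)⁶`. -/
theorem reznick_formula (x y z : ℝ) :
    540 * (x ^ 2 + y ^ 2 + z ^ 2) ^ 3 =
      378 * x ^ 6 + 378 * y ^ 6 + 280 * z ^ 6 +
      (Real.sqrt 3 * x + 2 * z) ^ 6 + (Real.sqrt 3 * x - 2 * z) ^ 6 +
      (Real.sqrt 3 * y + 2 * z) ^ 6 + (Real.sqrt 3 * y - 2 * z) ^ 6 +
      (Real.sqrt 3 * x + Real.sqrt 3 * y + z) ^ 6 +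
      (Real.sqrt 3 * x - Real.sqrt 3 * y + z) ^ 6 +
      (Real.sqrt 3 * x + Real.sqrt 3 * y - z) ^ 6 +
      (Real.sqrt 3 * x - Real.sqrt 3 * y - z) ^ 6 := by
  have h : Real.sqrt 3 ^ 2 = 3 := Real.sq_sqrt (by norm_num)
  linear_combination (-((540*y^2*z^4 + 540*x^2*z^4)
    + (180*y^4*z^2 + 360*x^2*y^2*z^2 + 180*x^4*z^2) * (Real.sqrt 3^2 + 3)
    + (6*y^6 + 60*x^2*y^4 + 60*x^4*y^2 + 6*x^6)
        * (Real.sqrt 3^4 + 3 * Real.sqrt 3^2 + 9))) * h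
end

section
/- Define α_j = (12960 + (−1)^j·864·√105)^{1/6} and β_j = (−1)^j·(1425 − (−1)^j·139·√105)^{1/6} for j = 0, 1 (all quantities under the sixth roots are positive), and let c_k = cos(2πk/5), s_k = sin(2πk/5) for k = 0,…,4. Then the following identity holds for all x, y, z ∈ ℝ: Σ_{j=0}^{1} Σ_{k=0}^{4} (α_j(c_k x + s_k y) + β_j z)⁶ + 26250·z⁶ = 40500·(x² + y² + z²)³. -/
open Real

private lemma rpow6 (t : ℝ) (ht : 0 ≤ t) : (t ^ ((1:ℝ)/6)) ^ 6 = t := by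
  rw [← Real.rpow_natCast (t ^ ((1:ℝ)/6)) 6, ← Real.rpow_mul ht]
  norm_num

private lemma Tsum1 (x y c s : ℝ) (hpy : s^2 = 1 - c^2) (hc : 4*c^2 + 2*c - 1 = 0) :
    x^1 + (c*x + s*y)^1 + ((2*c^2-1)*x + (2*s*c)*y)^1
    + ((4*c^3-3*c)*x + (3*s-4*s^3)*y)^1
    + ((2*(2*c^2-1)^2-1)*x + (2*(2*s*c)*(2*c^2-1))*y)^1 = 0 := by
  linear_combination ((-4)*s*y) * hpy + ((-1)*x + (2)*c^2*x + (2)*s*c*y) * hc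

private lemma Tsum2 (x y c s : ℝ) (hpy : s^2 = 1 - c^2) (hc : 4*c^2 + 2*c - 1 = 0) :
    x^2 + (c*x + s*y)^2 + ((2*c^2-1)*x + (2*s*c)*y)^2
    + ((4*c^3-3*c)*x + (3*s-4*s^3)*y)^2
    + ((2*(2*c^2-1)^2-1)*x + (2*(2*s*c)*(2*c^2-1))*y)^2 = (5/2)*(x^2+y^2) := by
  linear_combination ((2)*y^2 + (12)*c^2*y^2 + (-48)*c^4*y^2 + (64)*c^6*y^2 + (24)*s*c*x*y + (-32)*s*c^3*x*y + (-8)*s^2*y^2 + (-16)*s^2*c^2*y^2 + (16)*s^4*y^2) * hpy + ((1/2)*y^2 + (-1/2)*x^2 + (1)*c*y^2 + (-1)*c*x^2 + (-6)*c^2*y^2 + (6)*c^2*x^2 + (-8)*c^3*y^2 + (8)*c^3*x^2 + (20)*c^4*y^2 + (-20)*c^4*x^2 + (8)*c^5*y^2 + (-8)*c^5*x^2 + (-16)*c^6*y^2 + (16)*c^6*x^2 + (4)*s*c*x*y + (8)*s*c^2*x*y + (-24)*s*c^3*x*y + (-16)*s*c^4*x*y + (32)*s*c^5*x*y) * hc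

private lemma Tsum3 (x y c s : ℝ) (hpy : s^2 = 1 - c^2) (hc : 4*c^2 + 2*c - 1 = 0) :
    x^3 + (c*x + s*y)^3 + ((2*c^2-1)*x + (2*s*c)*y)^3
    + ((4*c^3-3*c)*x + (3*s-4*s^3)*y)^3
    + ((2*(2*c^2-1)^2-1)*x + (2*(2*s*c)*(2*c^2-1))*y)^3 = 0 := by
  linear_combination ((-6)*c*x*y^2 + (36)*c^2*x*y^2 + (84)*c^3*x*y^2 + (-552)*c^4*x*y^2 + (-240)*c^5*x*y^2 + (2112)*c^6*x*y^2 + (192)*c^7*x*y^2 + (-3072)*c^8*x*y^2 + (1536)*c^10*x*y^2 + (12)*s*c^2*y^3 + (-108)*s*c^2*x^2*y + (-56)*s*c^3*y^3 + (-48)*s*c^4*y^3 + (288)*s*c^4*x^2*y + (384)*s*c^5*y^3 + (64)*s*c^6*y^3 + (-192)*s*c^6*x^2*y + (-768)*s*c^7*y^3 + (512)*s*c^9*y^3 + (72)*s^2*c*x*y^2 + (48)*s^2*c^3*x*y^2 + (-192)*s^2*c^5*x*y^2 + (-28)*s^3*y^3 + (-16)*s^3*c^2*y^3 + (-64)*s^3*c^4*y^3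 + (-144)*s^4*c*x*y^2 + (192)*s^4*c^3*x*y^2 + (80)*s^5*y^3 + (64)*s^5*c^2*y^3 + (-64)*s^7*y^3) * hpy + ((-1)*x^3 + (6)*c*x*y^2 + (-2)*c*x^3 + (-24)*c^2*x*y^2 + (10)*c^2*x^3 + (-114)*c^3*x*y^2 + (38)*c^3*x^3 + (264)*c^4*x*y^2 + (-88)*c^4*x^3 + (396)*c^5*x*y^2 + (-132)*c^5*x^3 + (-816)*c^6*x*y^2 + (272)*c^6*x^3 + (-480)*c^7*x*y^2 + (160)*c^7*x^3 + (960)*c^8*x*y^2 + (-320)*c^8*x^3 + (192)*c^9*x*y^2 + (-64)*c^9*x^3 + (-384)*c^10*x*y^2 + (128)*c^10*x^3 + (6)*s*c*x^2*y + (-12)*s*c^2*y^3 + (36)*s*c^2*x^2*y + (32)*s*c^3*y^3 + (-96)*s*c^3*x^2*y + (76)*s*c^4*y^3 + (-228)*s*c^4*x^2*y + (-160)*s*c^5*y^3 + (480)*s*c^5*x^2*y + (-128)*s*c^6*y^3 + (384)*s*c^6*x^2*y + (256)*s*c^7*y^3 + (-768)*s*c^7*x^2*y + (64)*s*c^8*y^3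 + (-192)*s*c^8*x^2*y + (-128)*s*c^9*y^3 + (384)*s*c^9*x^2*y) * hc

private lemma Tsum4 (x y c s : ℝ) (hpy : s^2 = 1 - c^2) (hc : 4*c^2 + 2*c - 1 = 0) :
    x^4 + (c*x + s*y)^4 + ((2*c^2-1)*x + (2*s*c)*y)^4
    + ((4*c^3-3*c)*x + (3*s-4*s^3)*y)^4
    + ((2*(2*c^2-1)^2-1)*x + (2*(2*s*c)*(2*c^2-1))*y)^4 = (15/8)*(x^2+y^2)^2 := by
  linear_combination ((2)*y^4 + (-18)*c^2*y^4 + (180)*c^2*x^2*y^2 + (384)*c^4*y^4 + (-2592)*c^4*x^2*y^2 + (-2672)*c^6*y^4 + (16416)*c^6*x^2*y^2 + (8704)*c^8*y^4 + (-52224)*c^8*x^2*y^2 + (-14592)*c^10*y^4 + (87552)*c^10*x^2*y^2 + (12288)*c^12*y^4 + (-73728)*c^12*x^2*y^2 + (-4096)*c^14*y^4 + (24576)*c^14*x^2*y^2 + (16)*s*c*x*y^3 + (-448)*s*c^3*x*y^3 + (432)*s*c^3*x^3*y + (4416)*s*c^5*x*y^3 + (-1728)*s*c^5*x^3*y + (-18944)*s*c^7*x*y^3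 + (2304)*s*c^7*x^3*y + (39936)*s*c^9*x*y^3 + (-1024)*s*c^9*x^3*y + (-40960)*s*c^11*x*y^3 + (16384)*s*c^13*x*y^3 + (2)*s^2*y^4 + (-16)*s^2*c^2*y^4 + (-432)*s^2*c^2*x^2*y^2 + (368)*s^2*c^4*y^4 + (288)*s^2*c^4*x^2*y^2 + (-2304)*s^2*c^6*y^4 + (1536)*s^2*c^6*x^2*y^2 + (6400)*s^2*c^8*y^4 + (-1536)*s^2*c^8*x^2*y^2 + (-8192)*s^2*c^10*y^4 + (4096)*s^2*c^12*y^4 + (336)*s^3*c*x*y^3 + (-256)*s^3*c^3*x*y^3 + (512)*s^3*c^5*x*y^3 + (-1024)*s^3*c^7*x*y^3 + (-80)*s^4*y^4 + (-96)*s^4*c^2*y^4 + (864)*s^4*c^2*x^2*y^2 + (-2304)*s^4*c^4*x^2*y^2 + (-256)*s^4*c^6*y^4 + (1536)*s^4*c^6*x^2*y^2 + (-960)*s^5*c*x*y^3 + (512)*s^5*c^3*x*y^3 + (1024)*s^5*c^5*x*y^3 + (352)*s^6*y^4 + (256)*s^6*c^2*y^4 + (256)*s^6*c^4*y^4 + (768)*s^7*c*x*y^3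 + (-1024)*s^7*c^3*x*y^3 + (-512)*s^8*y^4 + (-256)*s^8*c^2*y^4 + (256)*s^10*y^4) * hpy + ((-1/8)*y^4 + (15/4)*x^2*y^2 + (-9/8)*x^4 + (-1/4)*c*y^4 + (15/2)*c*x^2*y^2 + (-9/4)*c*x^4 + (19)*c^2*y^4 + (-150)*c^2*x^2*y^2 + (31)*c^2*x^4 + (37)*c^3*y^4 + (-270)*c^3*x^2*y^2 + (53)*c^3*x^4 + (-252)*c^4*y^4 + (1632)*c^4*x^2*y^2 + (-292)*c^4*x^4 + (-356)*c^5*y^4 + (2184)*c^5*x^2*y^2 + (-372)*c^5*x^4 + (1336)*c^6*y^4 + (-8112)*c^6*x^2*y^2 + (1368)*c^6*x^4 + (1248)*c^7*y^4 + (-7488)*c^7*x^2*y^2 + (1248)*c^7*x^4 + (-3536)*c^8*y^4 + (21216)*c^8*x^2*y^2 + (-3536)*c^8*x^4 + (-2080)*c^9*y^4 + (12480)*c^9*x^2*y^2 + (-2080)*c^9*x^4 + (4992)*c^10*y^4 + (-29952)*c^10*x^2*y^2 + (4992)*c^10*x^4 + (1664)*c^11*y^4 + (-9984)*c^11*x^2*y^2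 + (1664)*c^11*x^4 + (-3584)*c^12*y^4 + (21504)*c^12*x^2*y^2 + (-3584)*c^12*x^4 + (-512)*c^13*y^4 + (3072)*c^13*x^2*y^2 + (-512)*c^13*x^4 + (1024)*c^14*y^4 + (-6144)*c^14*x^2*y^2 + (1024)*c^14*x^4 + (-16)*s*c*x*y^3 + (24)*s*c*x^3*y + (-32)*s*c^2*x*y^3 + (48)*s*c^2*x^3*y + (336)*s*c^3*x*y^3 + (-384)*s*c^3*x^3*y + (544)*s*c^4*x*y^3 + (-576)*s*c^4*x^3*y + (-2432)*s*c^5*x*y^3 + (2496)*s*c^5*x^3*y + (-2688)*s*c^6*x*y^3 + (2688)*s*c^6*x^3*y + (8256)*s*c^7*x*y^3 + (-8256)*s*c^7*x^3*y + (5760)*s*c^8*x*y^3 + (-5760)*s*c^8*x^3*y + (-14336)*s*c^9*x*y^3 + (14336)*s*c^9*x^3*y + (-5632)*s*c^10*x*y^3 + (5632)*s*c^10*x^3*y + (12288)*s*c^11*x*y^3 + (-12288)*s*c^11*x^3*y + (2048)*s*c^12*x*y^3 + (-2048)*s*c^12*x^3*y + (-4096)*s*c^13*x*y^3 + (4096)*s*c^13*x^3*y)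 * hc

private lemma Tsum5 (x y c s : ℝ) (hpy : s^2 = 1 - c^2) (hc : 4*c^2 + 2*c - 1 = 0) :
    x^5 + (c*x + s*y)^5 + ((2*c^2-1)*x + (2*s*c)*y)^5
    + ((4*c^3-3*c)*x + (3*s-4*s^3)*y)^5
    + ((2*(2*c^2-1)^2-1)*x + (2*(2*s*c)*(2*c^2-1))*y)^5 = (5/16)*(x^5-10*x^3*y^2+5*x*y^4) := by
  linear_combination ((-10)*c*x*y^4 + (120)*c^2*x^3*y^2 + (270)*c^3*x*y^4 + (-260)*c^3*x^3*y^2 + (1200)*c^4*x*y^4 + (-4240)*c^4*x^3*y^2 + (-2020)*c^5*x*y^4 + (3240)*c^5*x^3*y^2 + (-21520)*c^6*x*y^4 + (50080)*c^6*x^3*y^2 + (7520)*c^7*x*y^4 + (-14400)*c^7*x^3*y^2 + (143200)*c^8*x*y^4 + (-296640)*c^8*x^3*y^2 + (-14720)*c^9*x*y^4 + (29440)*c^9*x^3*y^2 + (-491520)*c^10*x*y^4 + (988160)*c^10*x^3*y^2 + (14080)*c^11*x*y^4 + (-28160)*c^11*x^3*y^2 + (962560)*c^12*x*y^4 + (-1925120)*c^12*x^3*y^2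 + (-5120)*c^13*x*y^4 + (10240)*c^13*x^3*y^2 + (-1085440)*c^14*x*y^4 + (2170880)*c^14*x^3*y^2 + (655360)*c^16*x*y^4 + (-1310720)*c^16*x^3*y^2 + (-163840)*c^18*x*y^4 + (327680)*c^18*x^3*y^2 + (20)*s*c^2*y^5 + (-80)*s*c^2*x^2*y^3 + (-560)*s*c^3*x^2*y^3 + (-180)*s*c^4*y^5 + (1320)*s*c^4*x^2*y^3 + (-1620)*s*c^4*x^4*y + (-992)*s*c^5*y^5 + (13760)*s*c^5*x^2*y^3 + (800)*s*c^6*y^5 + (-7360)*s*c^6*x^2*y^3 + (8640)*s*c^6*x^4*y + (11232)*s*c^7*y^5 + (-120000)*s*c^7*x^2*y^3 + (-1920)*s*c^8*y^5 + (19200)*s*c^8*x^2*y^3 + (-17280)*s*c^8*x^4*y + (-51200)*s*c^9*y^5 + (517120)*s*c^9*x^2*y^3 + (2304)*s*c^10*y^5 + (-23040)*s*c^10*x^2*y^3 + (15360)*s*c^10*x^4*y + (122880)*s*c^11*y^5 + (-1228800)*s*c^11*x^2*y^3 + (-1024)*s*c^12*y^5 + (10240)*s*c^12*x^2*y^3 +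 (-5120)*s*c^12*x^4*y + (-163840)*s*c^13*y^5 + (1638400)*s*c^13*x^2*y^3 + (114688)*s*c^15*y^5 + (-1146880)*s*c^15*x^2*y^3 + (-32768)*s*c^17*y^5 + (327680)*s*c^17*x^2*y^3 + (-10)*s^2*c*x*y^4 + (260)*s^2*c^3*x*y^4 + (2160)*s^2*c^3*x^3*y^2 + (1200)*s^2*c^4*x*y^4 + (-1760)*s^2*c^5*x*y^4 + (-4320)*s^2*c^5*x^3*y^2 + (-20320)*s^2*c^6*x*y^4 + (5760)*s^2*c^7*x*y^4 + (-5760)*s^2*c^7*x^3*y^2 + (122880)*s^2*c^8*x*y^4 + (-8960)*s^2*c^9*x*y^4 + (17920)*s^2*c^9*x^3*y^2 + (-368640)*s^2*c^10*x*y^4 + (5120)*s^2*c^11*x*y^4 + (-10240)*s^2*c^11*x^3*y^2 + (593920)*s^2*c^12*x*y^4 + (-491520)*s^2*c^14*x*y^4 + (163840)*s^2*c^16*x*y^4 + (20)*s^3*c^2*y^5 + (-2520)*s^3*c^2*x^2*y^3 + (-160)*s^3*c^4*y^5 + (5280)*s^3*c^4*x^2*y^3 + (-992)*s^3*c^5*y^5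 + (640)*s^3*c^6*y^5 + (-6400)*s^3*c^6*x^2*y^3 + (10240)*s^3*c^7*y^5 + (-1280)*s^3*c^8*y^5 + (12800)*s^3*c^8*x^2*y^3 + (-40960)*s^3*c^9*y^5 + (1024)*s^3*c^10*y^5 + (-10240)*s^3*c^10*x^2*y^3 + (81920)*s^3*c^11*y^5 + (-81920)*s^3*c^13*y^5 + (32768)*s^3*c^15*y^5 + (1200)*s^4*c*x*y^4 + (-160)*s^4*c^3*x*y^4 + (-4320)*s^4*c^3*x^3*y^2 + (-1920)*s^4*c^5*x*y^4 + (17280)*s^4*c^5*x^3*y^2 + (3840)*s^4*c^7*x*y^4 + (-23040)*s^4*c^7*x^3*y^2 + (-5120)*s^4*c^9*x*y^4 + (10240)*s^4*c^9*x^3*y^2 + (-244)*s^5*y^5 + (-224)*s^5*c^2*y^5 + (7200)*s^5*c^2*x^2*y^3 + (-384)*s^5*c^4*y^5 + (-13440)*s^5*c^4*x^2*y^3 + (256)*s^5*c^6*y^5 + (-2560)*s^5*c^6*x^2*y^3 + (-1024)*s^5*c^8*y^5 + (10240)*s^5*c^8*x^2*y^3 + (-5280)*s^6*c*x*y^4 +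 (3200)*s^6*c^3*x*y^4 + (1280)*s^6*c^5*x*y^4 + (5120)*s^6*c^7*x*y^4 + (1376)*s^7*y^5 + (1152)*s^7*c^2*y^5 + (-5760)*s^7*c^2*x^2*y^3 + (768)*s^7*c^4*y^5 + (15360)*s^7*c^4*x^2*y^3 + (1024)*s^7*c^6*y^5 + (-10240)*s^7*c^6*x^2*y^3 + (7680)*s^8*c*x*y^4 + (-6400)*s^8*c^3*x*y^4 + (-5120)*s^8*c^5*x*y^4 + (-2944)*s^9*y^5 + (-1792)*s^9*c^2*y^5 + (-1024)*s^9*c^4*y^5 + (-3840)*s^10*c*x*y^4 + (5120)*s^10*c^3*x*y^4 + (2816)*s^11*y^5 + (1024)*s^11*c^2*y^5 + (-1024)*s^13*y^5) * hpy + ((25/16)*x*y^4 + (-25/8)*x^3*y^2 + (-11/16)*x^5 + (105/8)*c*x*y^4 + (-25/4)*c*x^3*y^2 + (-11/8)*c*x^5 + (65/2)*c^2*x*y^4 + (-145)*c^2*x^3*y^2 + (49/2)*c^2*x^5 + (-325/2)*c^3*x*y^4 + (-55)*c^3*x^3*y^2 + (87/2)*c^3*x^5 + (-1395)*c^4*x*y^4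 + (3670)*c^4*x^3*y^2 + (-455)*c^4*x^5 + (-1150)*c^5*x*y^4 + (3620)*c^5*x^3*y^2 + (-494)*c^5*x^5 + (14840)*c^6*x*y^4 + (-32400)*c^6*x^3*y^2 + (3512)*c^6*x^5 + (15540)*c^7*x*y^4 + (-32680)*c^7*x^3*y^2 + (3428)*c^7*x^5 + (-74280)*c^8*x*y^4 + (151760)*c^8*x^3*y^2 + (-15496)*c^8*x^5 + (-64160)*c^9*x*y^4 + (128960)*c^9*x^3*y^2 + (-12960)*c^9*x^5 + (209280)*c^10*x*y^4 + (-419840)*c^10*x^3*y^2 + (42112)*c^10*x^5 + (133120)*c^11*x*y^4 + (-266240)*c^11*x^3*y^2 + (26624)*c^11*x^5 + (-350720)*c^12*x*y^4 + (701440)*c^12*x^3*y^2 + (-70144)*c^12*x^5 + (-149760)*c^13*x*y^4 + (299520)*c^13*x^3*y^2 + (-29952)*c^13*x^5 + (345600)*c^14*x*y^4 + (-691200)*c^14*x^3*y^2 + (69120)*c^14*x^5 + (87040)*c^15*x*y^4 + (-174080)*c^15*x^3*y^2 + (17408)*c^15*x^5 + (-184320)*c^16*x*y^4 + (368640)*c^16*x^3*y^2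 + (-36864)*c^16*x^5 + (-20480)*c^17*x*y^4 + (40960)*c^17*x^3*y^2 + (-4096)*c^17*x^5 + (40960)*c^18*x*y^4 + (-81920)*c^18*x^3*y^2 + (8192)*c^18*x^5 + (10)*s*c*x^4*y + (-20)*s*c^2*y^5 + (80)*s*c^2*x^2*y^3 + (20)*s*c^2*x^4*y + (-40)*s*c^3*y^5 + (720)*s*c^3*x^2*y^3 + (-520)*s*c^3*x^4*y + (40)*s*c^4*y^5 + (360)*s*c^4*x^2*y^3 + (-560)*s*c^4*x^4*y + (912)*s*c^5*y^5 + (-10720)*s*c^5*x^2*y^3 + (6160)*s*c^5*x^4*y + (1004)*s*c^6*y^5 + (-11320)*s*c^6*x^2*y^3 + (6300)*s*c^6*x^4*y + (-6568)*s*c^7*y^5 + (68240)*s*c^7*x^2*y^3 + (-35400)*s*c^7*x^4*y + (-6400)*s*c^8*y^5 + (64640)*s*c^8*x^2*y^3 + (-32640)*s*c^8*x^4*y + (23360)*s*c^9*y^5 + (-234880)*s*c^9*x^2*y^3 + (118080)*s*c^9*x^4*y + (16896)*s*c^10*y^5 + (-168960)*s*c^10*x^2*y^3 + (84480)*s*c^10*x^4*y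 + (-46848)*s*c^11*y^5 + (468480)*s*c^11*x^2*y^3 + (-234240)*s*c^11*x^4*y + (-22784)*s*c^12*y^5 + (227840)*s*c^12*x^2*y^3 + (-113920)*s*c^12*x^4*y + (53760)*s*c^13*y^5 + (-537600)*s*c^13*x^2*y^3 + (268800)*s*c^13*x^4*y + (15360)*s*c^14*y^5 + (-153600)*s*c^14*x^2*y^3 + (76800)*s*c^14*x^4*y + (-32768)*s*c^15*y^5 + (327680)*s*c^15*x^2*y^3 + (-163840)*s*c^15*x^4*y + (-4096)*s*c^16*y^5 + (40960)*s*c^16*x^2*y^3 + (-20480)*s*c^16*x^4*y + (8192)*s*c^17*y^5 + (-81920)*s*c^17*x^2*y^3 + (40960)*s*c^17*x^4*y) * hc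

private lemma Tsum6 (x y c s : ℝ) (hpy : s^2 = 1 - c^2) (hc : 4*c^2 + 2*c - 1 = 0) :
    x^6 + (c*x + s*y)^6 + ((2*c^2-1)*x + (2*s*c)*y)^6
    + ((4*c^3-3*c)*x + (3*s-4*s^3)*y)^6
    + ((2*(2*c^2-1)^2-1)*x + (2*(2*s*c)*(2*c^2-1))*y)^6 = (25/16)*(x^2+y^2)^3 := by
  linear_combination ((2)*y^6 + (-28)*c^2*y^6 + (150)*c^2*x^2*y^4 + (300)*c^2*x^4*y^2 + (290)*c^4*y^6 + (1410)*c^4*x^2*y^4 + (-7890)*c^4*x^4*y^2 + (2376)*c^6*y^6 + (-75720)*c^6*x^2*y^4 + (116760)*c^6*x^4*y^2 + (-50832)*c^8*y^6 + (893040)*c^8*x^2*y^4 + (-1023600)*c^8*x^4*y^2 + (333120)*c^10*y^6 + (-5215680)*c^10*x^2*y^4 + (5434560)*c^10*x^4*y^2 + (-1175808)*c^12*y^6 + (17821440)*c^12*x^2*y^4 + (-18005760)*c^12*x^4*y^2 + (2525184)*c^14*y^6 + (-37939200)*c^14*x^2*y^4 + (38000640)*c^14*x^4*y^2 + (-3403776)*c^16*y^6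 + (51056640)*c^16*x^2*y^4 + (-51056640)*c^16*x^4*y^2 + (2818048)*c^18*y^6 + (-42270720)*c^18*x^2*y^4 + (42270720)*c^18*x^4*y^2 + (-1310720)*c^20*y^6 + (19660800)*c^20*x^2*y^4 + (-19660800)*c^20*x^4*y^2 + (262144)*c^22*y^6 + (-3932160)*c^22*x^2*y^4 + (3932160)*c^22*x^4*y^2 + (24)*s*c*x*y^5 + (-408)*s*c^3*x*y^5 + (-880)*s*c^3*x^3*y^3 + (-2592)*s*c^5*x*y^5 + (30720)*s*c^5*x^3*y^3 + (5832)*s*c^5*x^5*y + (98592)*s*c^7*x*y^5 + (-423360)*s*c^7*x^3*y^3 + (-38880)*s*c^7*x^5*y + (-843648)*s*c^9*x*y^5 + (3011840)*s*c^9*x^3*y^3 + (103680)*s*c^9*x^5*y + (3648000)*s*c^11*x*y^5 + (-12364800)*s*c^11*x^3*y^3 + (-138240)*s*c^11*x^5*y + (-9265152)*s*c^13*x*y^5 + (30965760)*s*c^13*x^3*y^3 + (92160)*s*c^13*x^5*y + (14426112)*s*c^15*x*y^5 + (-48087040)*s*c^15*x^3*y^3 + (-24576)*s*c^15*x^5*y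 + (-13565952)*s*c^17*x*y^5 + (45219840)*s*c^17*x^3*y^3 + (7077888)*s*c^19*x*y^5 + (-23592960)*s*c^19*x^3*y^3 + (-1572864)*s*c^21*x*y^5 + (5242880)*s*c^21*x^3*y^3 + (2)*s^2*y^6 + (-26)*s^2*c^2*y^6 + (150)*s^2*c^2*x^2*y^4 + (264)*s^2*c^4*y^6 + (1560)*s^2*c^4*x^2*y^4 + (-9720)*s^2*c^4*x^4*y^2 + (2640)*s^2*c^6*y^6 + (-74160)*s^2*c^6*x^2*y^4 + (32400)*s^2*c^6*x^4*y^2 + (-48192)*s^2*c^8*y^6 + (818880)*s^2*c^8*x^2*y^4 + (284928)*s^2*c^10*y^6 + (-4396800)*s^2*c^10*x^2*y^4 + (-115200)*s^2*c^10*x^4*y^2 + (-890880)*s^2*c^12*y^6 + (13424640)*s^2*c^12*x^2*y^4 + (153600)*s^2*c^12*x^4*y^2 + (1634304)*s^2*c^14*y^6 + (-24514560)*s^2*c^14*x^2*y^4 + (-61440)*s^2*c^14*x^4*y^2 + (-1769472)*s^2*c^16*y^6 + (26542080)*s^2*c^16*x^2*y^4 + (1048576)*s^2*c^18*y^6 +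 (-15728640)*s^2*c^18*x^2*y^4 + (-262144)*s^2*c^20*y^6 + (3932160)*s^2*c^20*x^2*y^4 + (24)*s^3*c*x*y^5 + (-384)*s^3*c^3*x*y^5 + (15120)*s^3*c^3*x^3*y^3 + (-2976)*s^3*c^5*x*y^5 + (-51840)*s^3*c^5*x^3*y^3 + (95616)*s^3*c^7*x*y^5 + (80640)*s^3*c^7*x^3*y^3 + (-748032)*s^3*c^9*x*y^5 + (-128000)*s^3*c^9*x^3*y^3 + (2899968)*s^3*c^11*x*y^5 + (163840)*s^3*c^11*x^3*y^3 + (-6365184)*s^3*c^13*x*y^5 + (-81920)*s^3*c^13*x^3*y^3 + (8060928)*s^3*c^15*x*y^5 + (-5505024)*s^3*c^17*x*y^5 + (1572864)*s^3*c^19*x*y^5 + (2)*s^4*y^6 + (-24)*s^4*c^2*y^6 + (-10800)*s^4*c^2*x^2*y^4 + (240)*s^4*c^4*y^6 + (15840)*s^4*c^4*x^2*y^4 + (19440)*s^4*c^4*x^4*y^2 + (2880)*s^4*c^6*y^6 + (15360)*s^4*c^6*x^2*y^4 + (-103680)*s^4*c^6*x^4*y^2 + (-45312)*s^4*c^8*y^6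 + (-57600)*s^4*c^8*x^2*y^4 + (207360)*s^4*c^8*x^4*y^2 + (239616)*s^4*c^10*y^6 + (92160)*s^4*c^10*x^2*y^4 + (-184320)*s^4*c^10*x^4*y^2 + (-651264)*s^4*c^12*y^6 + (-61440)*s^4*c^12*x^2*y^4 + (61440)*s^4*c^12*x^4*y^2 + (983040)*s^4*c^14*y^6 + (-786432)*s^4*c^16*y^6 + (262144)*s^4*c^18*y^6 + (4392)*s^5*c*x*y^5 + (-1824)*s^5*c^3*x*y^5 + (-43200)*s^5*c^3*x^3*y^3 + (1536)*s^5*c^5*x*y^5 + (138240)*s^5*c^5*x^3*y^3 + (-13824)*s^5*c^7*x*y^5 + (-92160)*s^5*c^7*x^3*y^3 + (24576)*s^5*c^9*x*y^5 + (-81920)*s^5*c^9*x^3*y^3 + (-24576)*s^5*c^11*x*y^5 + (81920)*s^5*c^11*x^3*y^3 + (-728)*s^6*y^6 + (-752)*s^6*c^2*y^6 + (47520)*s^6*c^2*x^2*y^4 + (-512)*s^6*c^4*y^6 + (-92160)*s^6*c^4*x^2*y^4 + (-1792)*s^6*c^6*y^6 + (26880)*s^6*c^6*x^2*y^4 + (2048)*s^6*c^8*y^6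 + (-30720)*s^6*c^8*x^2*y^4 + (-4096)*s^6*c^10*y^6 + (61440)*s^6*c^10*x^2*y^4 + (-24768)*s^7*c*x*y^5 + (12288)*s^7*c^3*x*y^5 + (34560)*s^7*c^3*x^3*y^3 + (13824)*s^7*c^5*x*y^5 + (-138240)*s^7*c^5*x^3*y^3 + (184320)*s^7*c^7*x^3*y^3 + (24576)*s^7*c^9*x*y^5 + (-81920)*s^7*c^9*x^3*y^3 + (5104)*s^8*y^6 + (4352)*s^8*c^2*y^6 + (-69120)*s^8*c^2*x^2*y^4 + (3840)*s^8*c^4*y^6 + (149760)*s^8*c^4*x^2*y^4 + (2048)*s^8*c^6*y^6 + (-30720)*s^8*c^6*x^2*y^4 + (4096)*s^8*c^8*y^6 + (-61440)*s^8*c^8*x^2*y^4 + (52992)*s^9*c*x*y^5 + (-38400)*s^9*c^3*x*y^5 + (-24576)*s^9*c^5*x*y^5 + (-24576)*s^9*c^7*x*y^5 + (-14336)*s^10*y^6 + (-9984)*s^10*c^2*y^6 + (34560)*s^10*c^2*x^2*y^4 + (-6144)*s^10*c^4*y^6 + (-92160)*s^10*c^4*x^2*y^4 + (-4096)*s^10*c^6*y^6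 + (61440)*s^10*c^6*x^2*y^4 + (-50688)*s^11*c*x*y^5 + (49152)*s^11*c^3*x*y^5 + (24576)*s^11*c^5*x*y^5 + (20224)*s^12*y^6 + (10240)*s^12*c^2*y^6 + (4096)*s^12*c^4*y^6 + (18432)*s^13*c*x*y^5 + (-24576)*s^13*c^3*x*y^5 + (-14336)*s^14*y^6 + (-4096)*s^14*c^2*y^6 + (4096)*s^16*y^6) * hpy + ((-7/16)*y^6 + (75/16)*x^2*y^4 + (75/16)*x^4*y^2 + (-23/16)*x^6 + (-7/8)*c*y^6 + (75/8)*c*x^2*y^4 + (75/8)*c*x^4*y^2 + (-23/8)*c*x^6 + (53/2)*c^2*y^6 + (-225/2)*c^2*x^2*y^4 + (-525/2)*c^2*x^4*y^2 + (97/2)*c^2*x^6 + (99/2)*c^3*y^6 + (-375/2)*c^3*x^2*y^4 + (-975/2)*c^3*x^4*y^2 + (171/2)*c^3*x^6 + (-113)*c^4*y^6 + (-2085)*c^4*x^2*y^4 + (6165)*c^4*x^4*y^2 + (-703)*c^4*x^6 + (-28)*c^5*y^6 + (-4920)*c^5*x^2*y^4 + (10380)*c^5*x^4*y^2 + (-1064)*c^5*x^6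 + (-2594)*c^6*y^6 + (58950)*c^6*x^2*y^4 + (-79230)*c^6*x^4*y^2 + (6650)*c^6*x^6 + (-5300)*c^7*y^6 + (98220)*c^7*x^2*y^4 + (-116940)*c^7*x^4*y^2 + (9044)*c^7*x^6 + (32232)*c^8*y^6 + (-536520)*c^8*x^2*y^4 + (589560)*c^8*x^4*y^2 + (-42840)*c^8*x^6 + (43264)*c^9*y^6 + (-680160)*c^9*x^2*y^4 + (711360)*c^9*x^4*y^2 + (-49504)*c^9*x^6 + (-168496)*c^10*y^6 + (2602320)*c^10*x^2*y^4 + (-2677200)*c^10*x^4*y^2 + (183472)*c^10*x^6 + (-163936)*c^11*y^6 + (2484000)*c^11*x^2*y^4 + (-2508960)*c^11*x^4*y^2 + (168928)*c^11*x^6 + (507072)*c^12*y^6 + (-7659840)*c^12*x^2*y^4 + (7713600)*c^12*x^4*y^2 + (-517824)*c^12*x^6 + (358400)*c^13*y^6 + (-5383680)*c^13*x^2*y^4 + (5391360)*c^13*x^4*y^2 + (-359936)*c^13*x^6 + (-955904)*c^14*y^6 + (14353920)*c^14*x^2*y^4 + (-14369280)*c^14*x^4*y^2 + (958976)*c^14*x^6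 + (-478208)*c^15*y^6 + (7173120)*c^15*x^2*y^4 + (-7173120)*c^15*x^4*y^2 + (478208)*c^15*x^6 + (1148928)*c^16*y^6 + (-17233920)*c^16*x^2*y^4 + (17233920)*c^16*x^4*y^2 + (-1148928)*c^16*x^6 + (385024)*c^17*y^6 + (-5775360)*c^17*x^2*y^4 + (5775360)*c^17*x^4*y^2 + (-385024)*c^17*x^6 + (-856064)*c^18*y^6 + (12840960)*c^18*x^2*y^4 + (-12840960)*c^18*x^4*y^2 + (856064)*c^18*x^6 + (-172032)*c^19*y^6 + (2580480)*c^19*x^2*y^4 + (-2580480)*c^19*x^4*y^2 + (172032)*c^19*x^6 + (360448)*c^20*y^6 + (-5406720)*c^20*x^2*y^4 + (5406720)*c^20*x^4*y^2 + (-360448)*c^20*x^6 + (32768)*c^21*y^6 + (-491520)*c^21*x^2*y^4 + (491520)*c^21*x^4*y^2 + (-32768)*c^21*x^6 + (-65536)*c^22*y^6 + (983040)*c^22*x^2*y^4 + (-983040)*c^22*x^4*y^2 + (65536)*c^22*x^6 + (-24)*s*c*x*y^5 + (36)*s*c*x^5*y + (-48)*s*c^2*x*y^5 + (72)*s*c^2*x^5*y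 + (240)*s*c^3*x*y^5 + (880)*s*c^3*x^3*y^3 + (-840)*s*c^3*x^5*y + (288)*s*c^4*x*y^5 + (1760)*s*c^4*x^3*y^3 + (-1392)*s*c^4*x^5*y + (3720)*s*c^5*x*y^5 + (-24560)*s*c^5*x^3*y^3 + (11112)*s*c^5*x^5*y + (8592)*s*c^6*x*y^5 + (-42080)*s*c^6*x^3*y^3 + (16656)*s*c^6*x^5*y + (-69120)*s*c^7*x*y^5 + (271680)*s*c^7*x^3*y^3 + (-93888)*s*c^7*x^5*y + (-103872)*s*c^8*x*y^5 + (375040)*s*c^8*x^3*y^3 + (-121152)*s*c^8*x^5*y + (458016)*s*c^9*x*y^5 + (-1598400)*s*c^9*x^3*y^3 + (501024)*s*c^9*x^5*y + (500544)*s*c^10*x*y^5 + (-1696640)*s*c^10*x^3*y^3 + (517440)*s*c^10*x^5*y + (-1658496)*s*c^11*x*y^5 + (5589760)*s*c^11*x^3*y^3 + (-1695360)*s*c^11*x^5*y + (-1314816)*s*c^12*x*y^5 + (4392960)*s*c^12*x^3*y^3 + (-1320960)*s*c^12*x^5*y + (3649536)*s*c^13*x*y^5 + (-12185600)*s*c^13*x^3*y^3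 + (3661824)*s*c^13*x^5*y + (2039808)*s*c^14*x*y^5 + (-6799360)*s*c^14*x^3*y^3 + (2039808)*s*c^14*x^5*y + (-5013504)*s*c^15*x*y^5 + (16711680)*s*c^15*x^3*y^3 + (-5013504)*s*c^15*x^5*y + (-1867776)*s*c^16*x*y^5 + (6225920)*s*c^16*x^3*y^3 + (-1867776)*s*c^16*x^5*y + (4202496)*s*c^17*x*y^5 + (-14008320)*s*c^17*x^3*y^3 + (4202496)*s*c^17*x^5*y + (933888)*s*c^18*x*y^5 + (-3112960)*s*c^18*x^3*y^3 + (933888)*s*c^18*x^5*y + (-1966080)*s*c^19*x*y^5 + (6553600)*s*c^19*x^3*y^3 + (-1966080)*s*c^19*x^5*y + (-196608)*s*c^20*x*y^5 + (655360)*s*c^20*x^3*y^3 + (-196608)*s*c^20*x^5*y + (393216)*s*c^21*x*y^5 + (-1310720)*s*c^21*x^3*y^3 + (393216)*s*c^21*x^5*y) * hc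

private lemma key_sum (a b x y z c s : ℝ) (hpy : s^2 = 1 - c^2)
    (hc : 4*c^2 + 2*c - 1 = 0) :
    (a*x + b*z)^6 + (a*(c*x + s*y) + b*z)^6
    + (a*((2*c^2-1)*x + (2*s*c)*y) + b*z)^6
    + (a*((4*c^3-3*c)*x + (3*s-4*s^3)*y) + b*z)^6
    + (a*((2*(2*c^2-1)^2-1)*x + (2*(2*s*c)*(2*c^2-1))*y) + b*z)^6
    = 5*b^6*z^6 + (75/2)*a^2*b^4*z^4*(x^2+y^2) + (225/8)*a^4*b^2*z^2*(x^2+y^2)^2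
    + (25/16)*a^6*(x^2+y^2)^3 + (15/8)*a^5*b*z*(x^5-10*x^3*y^2+5*x*y^4) := by
  linear_combination a^6 * Tsum6 x y c s hpy hc + 6*a^5*b*z * Tsum5 x y c s hpy hc
    + 15*a^4*b^2*z^2 * Tsum4 x y c s hpy hc + 20*a^3*b^3*z^3 * Tsum3 x y c s hpy hc
    + 15*a^2*b^4*z^4 * Tsum2 x y c s hpy hc + 6*a*b^5*z^5 * Tsum1 x y c s hpy hc
/-- The new `11`-point weighted spherical `(3,3)`-design for `ℝ³` with dihedral symmetry
`D₅`, as a sum-of-sixth-powers identity:  with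
`α_j = (12960 + (−1)ʲ·864√105)^{1/6}`, `β_j = (−1)ʲ·(1425 − (−1)ʲ·139√105)^{1/6}`
(`j = 0,1`) and `c_k = cos(2πk/5)`, `s_k = sin(2πk/5)` (`k = 0,…,4`), one has
`Σ_j Σ_k (α_j(c_k x + s_k y) + β_j z)⁶ + 26250 z⁶ = 40500 (x²+y²+z²)³`. -/
theorem new_eleven_point_design_identity (x y z : ℝ) :
    (∑ j : Fin 2, ∑ k : Fin 5,
        (((12960 : ℝ) + (-1 : ℝ) ^ (j : ℕ) * 864 * Real.sqrt 105) ^ ((1 : ℝ)/6) *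
            (Real.cos (2 * Real.pi * (k : ℕ) / 5) * x +
             Real.sin (2 * Real.pi * (k : ℕ) / 5) * y) +
          (-1 : ℝ) ^ (j : ℕ) *
            ((1425 : ℝ) - (-1 : ℝ) ^ (j : ℕ) * 139 * Real.sqrt 105) ^ ((1 : ℝ)/6) * z) ^ 6)
      + 26250 * z ^ 6
      = 40500 * (x ^ 2 + y ^ 2 + z ^ 2) ^ 3 := by
  have hS : Real.sqrt 105 ^ 2 = 105 := Real.sq_sqrt (by norm_num)
  have hSn : (0:ℝ) ≤ Real.sqrt 105 := Real.sqrt_nonneg _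
  have hP0 : (0:ℝ) ≤ 12960 + 864 * Real.sqrt 105 := by nlinarith
  have hP1 : (0:ℝ) ≤ 12960 + -(864 * Real.sqrt 105) := by nlinarith
  have hR0 : (0:ℝ) ≤ 1425 - 139 * Real.sqrt 105 := by nlinarith
  have hR1 : (0:ℝ) ≤ 1425 + 139 * Real.sqrt 105 := by nlinarith
  set S := Real.sqrt 105 with hSdef
  set A0 := ((12960 : ℝ) + 864 * S) ^ ((1:ℝ)/6) with hA0def
  set A1 := ((12960 : ℝ) + -(864 * S)) ^ ((1:ℝ)/6) with hA1def
  set B0 := ((1425 : ℝ) - 139 * S) ^ ((1:ℝ)/6) with hB0def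
  set D1 := ((1425 : ℝ) + 139 * S) ^ ((1:ℝ)/6) with hD1def
  have hA0n : 0 ≤ A0 := Real.rpow_nonneg hP0 _
  have hA1n : 0 ≤ A1 := Real.rpow_nonneg hP1 _
  have hB0n : 0 ≤ B0 := Real.rpow_nonneg hR0 _
  have hD1n : 0 ≤ D1 := Real.rpow_nonneg hR1 _
  have hA06 : A0 ^ 6 = 12960 + 864 * S := rpow6 _ hP0
  have hA16 : A1 ^ 6 = 12960 + -(864 * S) := rpow6 _ hP1
  have hB06 : B0 ^ 6 = 1425 - 139 * S := rpow6 _ hR0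
  have hD16 : D1 ^ 6 = 1425 + 139 * S := rpow6 _ hR1
  -- mixed power identities
  have h420 : A0 ^ 4 * B0 ^ 2 = 2160 - 144 * S := by
    refine (pow_left_inj₀ (by positivity) (by nlinarith) three_ne_zero).mp ?_
    have e : (A0 ^ 4 * B0 ^ 2) ^ 3 = (A0 ^ 6) ^ 2 * B0 ^ 6 := by ring
    rw [e, hA06, hB06]
    linear_combination ((-2183500800 : ℝ) + (-100776960) * S) * hS
  have h421 : A1 ^ 4 * D1 ^ 2 = 2160 + 144 * S := by
    refine (pow_left_inj₀ (by positivity) (by nlinarith) three_ne_zero).mp ?_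
    have e : (A1 ^ 4 * D1 ^ 2) ^ 3 = (A1 ^ 6) ^ 2 * D1 ^ 6 := by ring
    rw [e, hA16, hD16]
    linear_combination ((-2183500800 : ℝ) + (100776960) * S) * hS
  have h240 : A0 ^ 2 * B0 ^ 4 = 1620 - 156 * S := by
    refine (pow_left_inj₀ (by positivity) (by nlinarith) three_ne_zero).mp ?_
    have e : (A0 ^ 2 * B0 ^ 4) ^ 3 = (A0 ^ 6) * (B0 ^ 6) ^ 2 := by ring
    rw [e, hA06, hB06]
    linear_combination ((-210146400 : ℝ) + (20489760) * S) * hS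
  have h241 : A1 ^ 2 * D1 ^ 4 = 1620 + 156 * S := by
    refine (pow_left_inj₀ (by positivity) (by nlinarith) three_ne_zero).mp ?_
    have e : (A1 ^ 2 * D1 ^ 4) ^ 3 = (A1 ^ 6) * (D1 ^ 6) ^ 2 := by ring
    rw [e, hA16, hD16]
    linear_combination ((-210146400 : ℝ) + (-20489760) * S) * hS
  have h51 : A0 ^ 5 * B0 = A1 ^ 5 * D1 := by
    refine (pow_left_inj₀ (by positivity) (by positivity) (by norm_num : (6:ℕ) ≠ 0)).mp ?_
    have e0 : (A0 ^ 5 * B0) ^ 6 = (A0 ^ 6) ^ 5 * B0 ^ 6 := by ring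
    have e1 : (A1 ^ 5 * D1) ^ 6 = (A1 ^ 6) ^ 5 * D1 ^ 6 := by ring
    rw [e0, e1, hA06, hA16, hB06, hD16]
    linear_combination ((-2339941401640304640000 : ℝ) * S + (-8666449635704832000) * S^3) * hS
  -- trig relations
  have hpy : Real.sin (2 * π / 5) ^ 2 = 1 - Real.cos (2 * π / 5) ^ 2 := Real.sin_sq _
  have h5 : Real.sqrt 5 ^ 2 = 5 := Real.sq_sqrt (by norm_num)
  have hc : 4 * Real.cos (2 * π / 5) ^ 2 + 2 * Real.cos (2 * π / 5) - 1 = 0 := by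
    rw [show (2 * π / 5 : ℝ) = 2 * (π / 5) by ring, Real.cos_two_mul, Real.cos_pi_div_five]
    linear_combination ((Real.sqrt 5 ^ 2 + 4 * Real.sqrt 5 - 1) / 16) * h5
  -- expand the sums and reduce angles
  norm_num [Fin.sum_univ_two, Fin.sum_univ_five,
    show ((3 : Fin 5) : ℕ) = 3 from rfl, show ((4 : Fin 5) : ℕ) = 4 from rfl]
  rw [show (2 * π * 2 / 5 : ℝ) = 2 * (2 * π / 5) by ring,
      show (2 * π * 3 / 5 : ℝ) = 3 * (2 * π / 5) by ring,
      show (2 * π * 4 / 5 : ℝ) = 2 * (2 * (2 * π / 5)) by ring]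
  simp only [Real.cos_two_mul, Real.sin_two_mul, Real.cos_three_mul, Real.sin_three_mul]
  linear_combination
    key_sum A0 B0 x y z (Real.cos (2 * π / 5)) (Real.sin (2 * π / 5)) hpy hc
    + key_sum A1 (-D1) x y z (Real.cos (2 * π / 5)) (Real.sin (2 * π / 5)) hpy hc
    + 5 * z ^ 6 * hB06 + 5 * z ^ 6 * hD16
    + (75/2) * z ^ 4 * (x ^ 2 + y ^ 2) * (h240 + h241)
    + (225/8) * z ^ 2 * (x ^ 2 + y ^ 2) ^ 2 * (h420 + h421)
    + (25/16) * (x ^ 2 + y ^ 2) ^ 3 * (hA06 + hA16)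
    + (15/8) * z * (x ^ 5 - 10 * x ^ 3 * y ^ 2 + 5 * x * y ^ 4) * h51
end

section
/- Let a₁, a₂, b₁, b₂, b₃ be real numbers and let v₁,…,v₁₁ ∈ ℝ³ be given by v_{k+1} = (a₁ cos(2πk/5), a₁ sin(2πk/5), b₁) and v_{k+6} = (a₂ cos(2πk/5), a₂ sin(2πk/5), −b₂) for k = 0,…,4, and v₁₁ = (0, 0, −b₃). If (v_j) is a weighted spherical (3,3)-design for ℝ³ (equivalently, there is a constant C with Σ_{j=1}^{11} ⟨x, v_j⟩⁶ = C‖x‖⁶ for all x ∈ ℝ³), then 5b₁⁶ + 5b₂⁶ + b₃⁶ = (25/16)(a₁⁶ + a₂⁶) and a₁⁶ + a₂⁶ = 6(a₁⁴b₁² + a₂⁴b₂²) = 8(a₁²b₁⁴ + a₂²b₂⁴). -/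
open Real

private lemma sum_univ_eleven {β : Type*} [AddCommMonoid β] (f : Fin 11 → β) :
    ∑ i, f i = f 0 + f 1 + f 2 + f 3 + f 4 + f 5 + f 6 + f 7 + f 8 + f 9 + f 10 := by
  rw [Fin.sum_univ_castSucc, Fin.sum_univ_castSucc, Fin.sum_univ_castSucc, Fin.sum_univ_eight]
  rfl

private lemma ip3 (c s X Y Z : ℝ) :
    (∑ i : Fin 3, (![c, 0, s]) i * (![X, Y, Z]) i) = c * X + s * Z := by
  simp [Fin.sum_univ_three]

private lemma sq3 (c s : ℝ) : (∑ i : Fin 3, (![c, 0, s]) i ^ 2) = c ^ 2 + s ^ 2 := by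
  simp [Fin.sum_univ_three]

private lemma cos1 : Real.cos (2 * π / 5) = (√5 - 1) / 4 := by
  rw [show (2 * π / 5 : ℝ) = 2 * (π / 5) by ring, Real.cos_two_mul, Real.cos_pi_div_five]
  have hs : (√5 : ℝ) ^ 2 = 5 := Real.sq_sqrt (by norm_num)
  linear_combination (1/8) * hs

private lemma cos2 : Real.cos (2 * π * 2 / 5) = -(1 + √5) / 4 := by
  rw [show (2 * π * 2 / 5 : ℝ) = 2 * (2 * π / 5) by ring, Real.cos_two_mul, cos1]
  have hs : (√5 : ℝ) ^ 2 = 5 := Real.sq_sqrt (by norm_num)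
  linear_combination (1/8) * hs

private lemma cos3 : Real.cos (2 * π * 3 / 5) = -(1 + √5) / 4 := by
  rw [show (2 * π * 3 / 5 : ℝ) = 2 * π - 2 * π * 2 / 5 by ring, Real.cos_two_pi_sub, cos2]

private lemma cos4 : Real.cos (2 * π * 4 / 5) = (√5 - 1) / 4 := by
  rw [show (2 * π * 4 / 5 : ℝ) = 2 * π - 2 * π / 5 by ring, Real.cos_two_pi_sub, cos1]

/-- Necessary conditions for the `D₅`-symmetric configuration of two lifted sets of five
equally spaced lines plus one axis vector to be a weighted spherical `(3,3)`-design for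
`ℝ³`:  if `Σ_j ⟨x, v_j⟩⁶ = C‖x‖⁶` for all `x ∈ ℝ³`, then
`5b₁⁶ + 5b₂⁶ + b₃⁶ = (25/16)(a₁⁶ + a₂⁶)` and
`a₁⁶ + a₂⁶ = 6(a₁⁴b₁² + a₂⁴b₂²) = 8(a₁²b₁⁴ + a₂²b₂⁴)`. -/
theorem new_design_necessary_conditions (a₁ a₂ b₁ b₂ b₃ : ℝ)
    (v : Fin 11 → Fin 3 → ℝ)
    (hv₁ : ∀ k : Fin 5, v ⟨(k : ℕ), by omega⟩ =
      ![a₁ * Real.cos (2 * Real.pi * (k : ℕ) / 5),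
        a₁ * Real.sin (2 * Real.pi * (k : ℕ) / 5), b₁])
    (hv₂ : ∀ k : Fin 5, v ⟨(k : ℕ) + 5, by omega⟩ =
      ![a₂ * Real.cos (2 * Real.pi * (k : ℕ) / 5),
        a₂ * Real.sin (2 * Real.pi * (k : ℕ) / 5), -b₂])
    (hv₃ : v ⟨10, by omega⟩ = ![0, 0, -b₃])
    (C : ℝ)
    (hdesign : ∀ x : Fin 3 → ℝ,
      ∑ j : Fin 11, (∑ i, x i * v j i) ^ 6 = C * (∑ i, x i ^ 2) ^ 3) :
    5 * b₁ ^ 6 + 5 * b₂ ^ 6 + b₃ ^ 6 = 25/16 * (a₁ ^ 6 + a₂ ^ 6) ∧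
    a₁ ^ 6 + a₂ ^ 6 = 6 * (a₁ ^ 4 * b₁ ^ 2 + a₂ ^ 4 * b₂ ^ 2) ∧
    a₁ ^ 6 + a₂ ^ 6 = 8 * (a₁ ^ 2 * b₁ ^ 4 + a₂ ^ 2 * b₂ ^ 4) := by
  have hs : (√5 : ℝ) ^ 2 = 5 := Real.sq_sqrt (by norm_num)
  have V0 : v 0 = ![a₁, 0, b₁] := by simpa using hv₁ 0
  have V1 : v 1 = ![a₁ * ((√5 - 1) / 4), a₁ * Real.sin (2 * π / 5), b₁] := by
    simpa [cos1] using hv₁ 1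
  have V2 : v 2 = ![a₁ * (-(1 + √5) / 4), a₁ * Real.sin (2 * π * 2 / 5), b₁] := by
    simpa [cos2] using hv₁ 2
  have V3 : v 3 = ![a₁ * (-(1 + √5) / 4), a₁ * Real.sin (2 * π * 3 / 5), b₁] := by
    simpa [cos3] using hv₁ ⟨3, by omega⟩
  have V4 : v 4 = ![a₁ * ((√5 - 1) / 4), a₁ * Real.sin (2 * π * 4 / 5), b₁] := by
    simpa [cos4] using hv₁ ⟨4, by omega⟩
  have V5 : v 5 = ![a₂, 0, -b₂] := by simpa using hv₂ 0
  have V6 : v 6 = ![a₂ * ((√5 - 1) / 4), a₂ * Real.sin (2 * π / 5), -b₂] := by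
    simpa [cos1] using hv₂ 1
  have V7 : v 7 = ![a₂ * (-(1 + √5) / 4), a₂ * Real.sin (2 * π * 2 / 5), -b₂] := by
    simpa [cos2] using hv₂ 2
  have V8 : v 8 = ![a₂ * (-(1 + √5) / 4), a₂ * Real.sin (2 * π * 3 / 5), -b₂] := by
    simpa [cos3] using hv₂ ⟨3, by omega⟩
  have V9 : v 9 = ![a₂ * ((√5 - 1) / 4), a₂ * Real.sin (2 * π * 4 / 5), -b₂] := by
    simpa [cos4] using hv₂ ⟨4, by omega⟩
  have V10 : v 10 = ![0, 0, -b₃] := by simpa using hv₃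
  have key : ∀ c s : ℝ,
      (c * a₁ + s * b₁) ^ 6
      + 2 * (c * (a₁ * ((√5 - 1) / 4)) + s * b₁) ^ 6
      + 2 * (c * (a₁ * (-(1 + √5) / 4)) + s * b₁) ^ 6
      + (c * a₂ - s * b₂) ^ 6
      + 2 * (c * (a₂ * ((√5 - 1) / 4)) - s * b₂) ^ 6
      + 2 * (c * (a₂ * (-(1 + √5) / 4)) - s * b₂) ^ 6
      + s ^ 6 * b₃ ^ 6 = C * (c ^ 2 + s ^ 2) ^ 3 := by
    intro c s
    have h := hdesign ![c, 0, s]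
    rw [sum_univ_eleven] at h
    rw [V0, V1, V2, V3, V4, V5, V6, V7, V8, V9, V10] at h
    rw [ip3, ip3, ip3, ip3, ip3, ip3, ip3, ip3, ip3, ip3, ip3, sq3] at h
    linear_combination h
  have R10 := key 1 0
  have R01 := key 0 1
  have R11 := key 1 1
  have R1m1 := key 1 (-1)
  have R21 := key 2 1
  have R2m1 := key 2 (-1)
  refine ⟨?_, ?_, ?_⟩
  · linear_combination R01 - R10
      + (a₁ ^ 6 + a₂ ^ 6) * ((√5) ^ 4 + 20 * (√5) ^ 2 + 115) / 1024 * hs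
  · linear_combination (128/75) * R10 + (-4/75) * R01 + (8/225) * R11 + (8/225) * R1m1
      + (-2/225) * R21 + (-2/225) * R2m1
      + (-(a₁ ^ 6 + a₂ ^ 6) * ((√5) ^ 4 + 20 * (√5) ^ 2 + 115) / 1600
         + (a₁ ^ 4 * b₁ ^ 2 + a₂ ^ 4 * b₂ ^ 2) * ((√5) ^ 2 + 11) / 20) * hs
  · linear_combination (-16/75) * R10 + (4/15) * R01 + (-32/225) * R11 + (-32/225) * R1m1
      + (2/225) * R21 + (2/225) * R2m1
      + (-(a₁ ^ 6 + a₂ ^ 6) * ((√5) ^ 4 + 20 * (√5) ^ 2 + 115) / 1600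
         + (4/5) * (a₁ ^ 2 * b₁ ^ 4 + a₂ ^ 2 * b₂ ^ 4)) * hs
end

section
/- The following polynomial identity holds in ℝ[x₁,x₂,x₃,x₄] (Kempner's identity): 120·(x₁² + x₂² + x₃² + x₄²)³ = Σ_{i=1}^{4} (2x_i)⁶ + 8·Σ_{1≤i<j≤4} ((x_i + x_j)⁶ + (x_i − x_j)⁶) + Σ_{(ε₂,ε₃,ε₄)∈{±1}³} (x₁ + ε₂x₂ + ε₃x₃ + ε₄x₄)⁶. -/
open Real Finset

/-- Kempner's identity: the quaternary sextic identity
`120(x₁²+x₂²+x₃²+x₄²)³ = Σᵢ(2xᵢ)⁶ + 8Σ_{i<j}((xᵢ+xⱼ)⁶ + (xᵢ−xⱼ)⁶)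
 + Σ_{(ε₂,ε₃,ε₄)∈{±1}³}(x₁ + ε₂x₂ + ε₃x₃ + ε₄x₄)⁶`. -/
theorem kempner_identity (x : Fin 4 → ℝ) :
    120 * (∑ i, x i ^ 2) ^ 3 =
      (∑ i, (2 * x i) ^ 6) +
      8 * (∑ i, ∑ j, if i < j then (x i + x j) ^ 6 + (x i - x j) ^ 6 else 0) +
      (∑ ε ∈ ({-1, 1} : Finset ℝ) ×ˢ ({-1, 1} : Finset ℝ) ×ˢ ({-1, 1} : Finset ℝ),
        (x 0 + ε.1 * x 1 + ε.2.1 * x 2 + ε.2.2 * x 3) ^ 6) := by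
  simp only [Fin.sum_univ_four, Finset.sum_product, Finset.sum_insert, Finset.sum_singleton,
    Finset.mem_insert, Finset.mem_singleton]
  have h1 : ((0:Fin 4) < 3) := by decide
  have h2 : ((1:Fin 4) < 3) := by decide
  have h3 : ((2:Fin 4) < 3) := by decide
  have h4 : ¬((3:Fin 4) = 0) := by decide
  have h5 : ¬((3:Fin 4) < 2) := by decide
  have h6 : ¬((3:Fin 4) < 3) := by decide
  have h7 : ¬((3:Fin 4) < 1) := by decide
  have h8 : ¬((3:Fin 4) < 0) := by decide
  norm_num [Fin.lt_def, h1, h2, h3, h4, h5, h6, h7, h8]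
  ring
end

section
/- Let t ≥ 1, d ≥ 1, let v₁,…,vₙ ∈ ℝ^d be not all zero, and suppose there is a constant C ∈ ℝ such that C·‖x‖^{2t} = Σ_{j=1}^{n} ⟨x, v_j⟩^{2t} for all x ∈ ℝ^d. Then C = c_t(ℝ^d)·Σ_{j=1}^{n} ‖v_j‖^{2t}, where c_t(ℝ^d) = ∏_{j=0}^{t-1} (2j+1)/(d+2j), and consequently (v_j) is a spherical (t,t)-design for ℝ^d, i.e. Σ_{j=1}^n Σ_{k=1}^n ⟨v_j,v_k⟩^{2t} = c_t(ℝ^d)·(Σ_{ℓ=1}^n ‖v_ℓ‖^{2t})². -/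
open Real Finset

open MeasureTheory Set


lemma moment1d (m : ℕ) :
    ∫ s : ℝ, s ^ (2 * m) * Real.exp (-s ^ 2) = Real.Gamma ((2 * m + 1) / 2) := by
  have h1 : (fun s : ℝ => s ^ (2 * m) * Real.exp (-s ^ 2))
      = fun s : ℝ => (fun r : ℝ => r ^ (2 * m) * Real.exp (-r ^ 2)) |s| := by
    funext s
    simp [(even_two_mul m).pow_abs, sq_abs]
  rw [h1, integral_comp_abs (f := fun r : ℝ => r ^ (2 * m) * Real.exp (-r ^ 2))]
  have h2 : ∫ x in Ioi (0:ℝ), x ^ (2*m) * Real.exp (-x ^ 2)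
      = ∫ x in Ioi (0:ℝ), x ^ ((2*m : ℕ) : ℝ) * Real.exp (-x ^ (2:ℝ)) := by
    refine setIntegral_congr_fun measurableSet_Ioi (fun x hx => ?_)
    rw [Real.rpow_natCast, show ((2:ℝ)) = ((2:ℕ):ℝ) by norm_num, Real.rpow_natCast]
  rw [h2, integral_rpow_mul_exp_neg_rpow (by norm_num) (lt_of_lt_of_le neg_one_lt_zero (Nat.cast_nonneg _))]
  push_cast
  ring


lemma gauss_pi (d : ℕ) [NeZero d] (m : ℕ) :
    ∫ x : EuclideanSpace ℝ (Fin d), (x 0) ^ (2 * m) * Real.exp (-‖x‖ ^ 2)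
      = (∫ s : ℝ, s ^ (2 * m) * Real.exp (-s ^ 2)) * (∫ s : ℝ, Real.exp (-s ^ 2)) ^ (d - 1) := by
  have := (EuclideanSpace.volume_preserving_symm_measurableEquiv_toLp (Fin d)).symm
  rw [← this.integral_comp']
  have key : ∀ y : Fin d → ℝ,
      ((MeasurableEquiv.toLp 2 (Fin d → ℝ)).symm.symm y 0) ^ (2 * m)
        * Real.exp (-‖(MeasurableEquiv.toLp 2 (Fin d → ℝ)).symm.symm y‖ ^ 2)
      = ∏ i, (if i = 0 then (y i) ^ (2 * m) else 1) * Real.exp (-(y i) ^ 2) := by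
    intro y
    rw [Finset.prod_mul_distrib, Finset.prod_ite_eq' Finset.univ 0 (fun i => (y i) ^ (2*m))]
    simp only [MeasurableEquiv.symm_symm, MeasurableEquiv.toLp_apply,
      EuclideanSpace.norm_eq, PiLp.toLp_apply, Real.norm_eq_abs, sq_abs,
      Finset.mem_univ, if_true]
    rw [Real.sq_sqrt (by positivity), ← Real.exp_sum]
    simp [Finset.sum_neg_distrib]
  simp only [key]
  rw [volume_pi, MeasureTheory.integral_fintype_prod_eq_prod (ι := Fin d)
    (f := fun i s => (if i = 0 then s ^ (2 * m) else 1) * Real.exp (-s ^ 2))]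
  rw [← Finset.mul_prod_erase Finset.univ _ (Finset.mem_univ 0)]
  simp only [if_pos rfl]
  congr 1
  have : ∀ i ∈ Finset.univ.erase (0 : Fin d),
      (∫ s : ℝ, (if i = 0 then s ^ (2 * m) else 1) * Real.exp (-s ^ 2))
        = ∫ s : ℝ, Real.exp (-s ^ 2) := by
    intro i hi
    simp [(Finset.mem_erase.mp hi).1]
  rw [Finset.prod_congr rfl this, Finset.prod_const, Finset.card_erase_of_mem (Finset.mem_univ _),
    Finset.card_univ, Fintype.card_fin]


lemma gauss_radial (d : ℕ) (hd : 1 ≤ d) (m : ℕ) :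
    ∫ x : EuclideanSpace ℝ (Fin d), ‖x‖ ^ (2 * m) * Real.exp (-‖x‖ ^ 2)
      = (d * (volume (Metric.ball (0 : EuclideanSpace ℝ (Fin d)) 1)).toReal)
          * ((1 / 2) * Real.Gamma ((d + 2 * m) / 2)) := by
  haveI : NeZero d := ⟨by omega⟩
  haveI : Nontrivial (EuclideanSpace ℝ (Fin d)) := by
    refine ⟨0, EuclideanSpace.single 0 1, fun h => ?_⟩
    have := congrArg (fun z : EuclideanSpace ℝ (Fin d) => z 0) h
    simp at this
  rw [MeasureTheory.integral_fun_norm_addHaar (volume : Measure (EuclideanSpace ℝ (Fin d)))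
    (fun r : ℝ => r ^ (2 * m) * Real.exp (-r ^ 2))]
  have hdim : Module.finrank ℝ (EuclideanSpace ℝ (Fin d)) = d := finrank_euclideanSpace_fin
  rw [hdim]
  have h2 : ∫ y in Ioi (0:ℝ), y ^ (d - 1) • (y ^ (2*m) * Real.exp (-y ^ 2))
      = ∫ y in Ioi (0:ℝ), y ^ (((d - 1 + 2*m : ℕ)) : ℝ) * Real.exp (-y ^ (2:ℝ)) := by
    refine setIntegral_congr_fun measurableSet_Ioi (fun y hy => ?_)
    rw [Real.rpow_natCast, show ((2:ℝ)) = ((2:ℕ):ℝ) by norm_num, Real.rpow_natCast]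
    rw [smul_eq_mul, pow_add]
    ring
  rw [h2, integral_rpow_mul_exp_neg_rpow (by norm_num)
    (lt_of_lt_of_le neg_one_lt_zero (Nat.cast_nonneg _))]
  have h3 : (((d - 1 + 2*m : ℕ) : ℝ) + 1) / 2 = ((d : ℝ) + 2 * m) / 2 := by
    have : (d - 1 + 2*m : ℕ) = d + 2*m - 1 := by omega
    rw [this]
    have : ((d + 2*m - 1 : ℕ) : ℝ) = (d : ℝ) + 2*m - 1 := by
      push_cast [Nat.cast_sub (by omega : 1 ≤ d + 2*m)]
      ring
    rw [this]; ring
  rw [h3]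
  rw [nsmul_eq_mul, smul_eq_mul]
  rw [measureReal_def]; ring


lemma gauss_rot (d : ℕ) [NeZero d] (m : ℕ) (hm : 1 ≤ m)
    (u : EuclideanSpace ℝ (Fin d)) :
    ∫ x : EuclideanSpace ℝ (Fin d), (inner ℝ x u : ℝ) ^ (2 * m) * Real.exp (-‖x‖ ^ 2)
      = ‖u‖ ^ (2 * m) *
        ∫ x : EuclideanSpace ℝ (Fin d), (x 0) ^ (2 * m) * Real.exp (-‖x‖ ^ 2) := by
  rcases eq_or_ne u 0 with rfl | hu
  · simp [zero_pow (by omega : 2 * m ≠ 0), norm_zero]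
  · set w : EuclideanSpace ℝ (Fin d) := ‖u‖⁻¹ • u with hw
    have hnu : ‖u‖ ≠ 0 := norm_ne_zero_iff.mpr hu
    have hwn : ‖w‖ = 1 := by
      rw [hw, norm_smul, norm_inv, norm_norm, inv_mul_cancel₀ hnu]
    -- orthonormal basis with b 0 = w
    have hcard : Module.finrank ℝ (EuclideanSpace ℝ (Fin d)) = Fintype.card (Fin d) := by
      rw [finrank_euclideanSpace_fin, Fintype.card_fin]
    have horth : Orthonormal ℝ (({0} : Set (Fin d)).restrict (fun _ : Fin d => w)) := by
      constructor
      · intro i; exact hwn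
      · intro i j hij
        exact absurd (Subtype.ext (i.2.trans j.2.symm)) hij
    obtain ⟨b, hb⟩ := horth.exists_orthonormalBasis_extension_of_card_eq hcard
    have hb0 : b 0 = w := hb 0 rfl
    -- transfer along b.repr.symm
    have hmp : MeasurePreserving (b.repr.symm : EuclideanSpace ℝ (Fin d) ≃ₗᵢ[ℝ] _)
        volume volume := b.measurePreserving_repr_symm
    rw [← hmp.integral_comp (b.repr.symm.toHomeomorph.measurableEmbedding)]
    have hrepru : b.repr u = ‖u‖ • EuclideanSpace.single 0 1 := by
      have hu' : u = ‖u‖ • w := by rw [hw, smul_smul, mul_inv_cancel₀ hnu, one_smul]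
      have h2 : b.repr (‖u‖ • w) = ‖u‖ • b.repr w := b.repr.map_smul _ _
      rw [← hu'] at h2
      rw [h2, ← hb0, b.repr_self]
    have key : ∀ y : EuclideanSpace ℝ (Fin d),
        (inner ℝ (b.repr.symm y) u : ℝ) ^ (2 * m) * Real.exp (-‖b.repr.symm y‖ ^ 2)
        = ‖u‖ ^ (2 * m) * ((y 0) ^ (2 * m) * Real.exp (-‖y‖ ^ 2)) := by
      intro y
      have h1 : (inner ℝ (b.repr.symm y) u : ℝ) = ‖u‖ * y 0 := by
        calc (inner ℝ (b.repr.symm y) u : ℝ)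
            = (inner ℝ (b.repr (b.repr.symm y)) (b.repr u) : ℝ) :=
              (b.repr.inner_map_map _ _).symm
          _ = (inner ℝ y (‖u‖ • EuclideanSpace.single 0 1) : ℝ) := by
              rw [LinearIsometryEquiv.apply_symm_apply, hrepru]
          _ = ‖u‖ * y 0 := by
              rw [inner_smul_right]
              simp [EuclideanSpace.inner_single_right]
      rw [h1, LinearIsometryEquiv.norm_map, mul_pow]
      ring
    simp only [Function.comp_def, key]
    rw [integral_const_mul]


lemma int_gauss (d : ℕ) {b : ℝ} (hb : 0 < b) :
    Integrable (fun x : EuclideanSpace ℝ (Fin d) => Real.exp (-b * ‖x‖ ^ 2)) := by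
  have hmp := (EuclideanSpace.volume_preserving_symm_measurableEquiv_toLp (Fin d)).symm
  rw [← hmp.integrable_comp_emb (MeasurableEquiv.measurableEmbedding _)]
  have key : (fun x : EuclideanSpace ℝ (Fin d) => Real.exp (-b * ‖x‖ ^ 2))
      ∘ (MeasurableEquiv.toLp 2 (Fin d → ℝ)).symm.symm
      = fun y : Fin d → ℝ => ∏ i, Real.exp (-b * (y i) ^ 2) := by
    funext y
    simp only [Function.comp_apply, MeasurableEquiv.symm_symm, MeasurableEquiv.toLp_apply,
      EuclideanSpace.norm_eq, PiLp.toLp_apply,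
      Real.norm_eq_abs, sq_abs]
    rw [Real.sq_sqrt (by positivity), ← Real.exp_sum, Finset.mul_sum]
  rw [key]
  exact Integrable.fintype_prod (f := fun _ : Fin d => fun s : ℝ => Real.exp (-b * s ^ 2))
    (fun _ => integrable_exp_neg_mul_sq hb)

lemma int_ht (d : ℕ) (m : ℕ) :
    Integrable (fun x : EuclideanSpace ℝ (Fin d) => ‖x‖ ^ (2 * m) * Real.exp (-‖x‖ ^ 2)) := by
  refine Integrable.mono' (((int_gauss d (by norm_num : (0:ℝ) < 1/2)).const_mul
    ((2:ℝ) ^ m * m.factorial))) ?_ ?_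
  · exact Continuous.aestronglyMeasurable (by fun_prop)
  · filter_upwards with x
    have hz : (0:ℝ) ≤ ‖x‖ ^ 2 / 2 := by positivity
    have h1 : (‖x‖ ^ 2 / 2) ^ m / m.factorial ≤ Real.exp (‖x‖ ^ 2 / 2) := by
      simpa using Real.pow_div_factorial_le_exp (x := ‖x‖ ^ 2 / 2) hz m
    have hfac : (0:ℝ) < m.factorial := by positivity
    have h2 : ‖x‖ ^ (2 * m) ≤ 2 ^ m * m.factorial * Real.exp (‖x‖ ^ 2 / 2) := by
      have : ‖x‖ ^ (2 * m) = 2 ^ m * (‖x‖ ^ 2 / 2) ^ m := by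
        rw [pow_mul, div_pow]; field_simp
      rw [this]
      have := (div_le_iff₀ hfac).mp h1
      nlinarith [pow_pos (show (0:ℝ) < 2 by norm_num) m]
    have h3 : Real.exp (‖x‖ ^ 2 / 2) * Real.exp (-‖x‖ ^ 2) = Real.exp (-(1/2) * ‖x‖ ^ 2) := by
      rw [← Real.exp_add]; ring_nf
    rw [Real.norm_eq_abs, abs_of_nonneg (by positivity)]
    calc ‖x‖ ^ (2 * m) * Real.exp (-‖x‖ ^ 2)
        ≤ (2 ^ m * m.factorial * Real.exp (‖x‖ ^ 2 / 2)) * Real.exp (-‖x‖ ^ 2) := by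
          exact mul_le_mul_of_nonneg_right h2 (Real.exp_pos _).le
      _ = 2 ^ m * m.factorial * Real.exp (-(1/2) * ‖x‖ ^ 2) := by rw [mul_assoc, h3]

lemma int_inner (d : ℕ) (m : ℕ) (u : EuclideanSpace ℝ (Fin d)) :
    Integrable (fun x : EuclideanSpace ℝ (Fin d) =>
      (inner ℝ x u : ℝ) ^ (2 * m) * Real.exp (-‖x‖ ^ 2)) := by
  refine Integrable.mono' ((int_ht d m).const_mul (‖u‖ ^ (2 * m))) ?_ ?_
  · exact Continuous.aestronglyMeasurable
      (((continuous_id.inner continuous_const).pow _).mul (by fun_prop))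
  · filter_upwards with x
    rw [Real.norm_eq_abs, abs_mul, abs_of_nonneg (Real.exp_pos _).le, abs_pow]
    have h1 : |(inner ℝ x u : ℝ)| ^ (2 * m) ≤ (‖x‖ * ‖u‖) ^ (2 * m) :=
      pow_le_pow_left₀ (abs_nonneg _) (abs_real_inner_le_norm x u) _
    calc |(inner ℝ x u : ℝ)| ^ (2 * m) * Real.exp (-‖x‖ ^ 2)
        ≤ (‖x‖ * ‖u‖) ^ (2 * m) * Real.exp (-‖x‖ ^ 2) :=
          mul_le_mul_of_nonneg_right h1 (Real.exp_pos _).le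
      _ = ‖u‖ ^ (2 * m) * (‖x‖ ^ (2 * m) * Real.exp (-‖x‖ ^ 2)) := by ring


lemma Gamma_fact (x : ℝ) (hx : 0 < x) (m : ℕ) :
    Real.Gamma (x + m) = (∏ j ∈ Finset.range m, (x + j)) * Real.Gamma x := by
  induction m with
  | zero => simp
  | succ k ih =>
    have hxk : x + k ≠ 0 := by positivity
    have : x + (k + 1 : ℕ) = (x + k) + 1 := by push_cast; ring
    rw [this, Real.Gamma_add_one hxk, ih, Finset.prod_range_succ]
    ring


/-- If `C‖x‖^{2t} = Σⱼ⟨x,vⱼ⟩^{2t}` for all `x ∈ ℝᵈ` (with the `vⱼ` not all zero), then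
`C = c_t(ℝᵈ)·Σⱼ‖vⱼ‖^{2t}` with `c_t(ℝᵈ) = Π_{j=0}^{t-1}(2j+1)/(d+2j)`, and consequently
`(vⱼ)` is a spherical `(t,t)`-design for `ℝᵈ`:
`ΣⱼΣ_k⟨vⱼ,v_k⟩^{2t} = c_t(ℝᵈ)·(Σ_ℓ‖v_ℓ‖^{2t})²`. -/
theorem sum_of_powers_gives_design (t d n : ℕ) (ht : 1 ≤ t) (hd : 1 ≤ d)
    (v : Fin n → EuclideanSpace ℝ (Fin d)) (hv : ∃ j, v j ≠ 0) (C : ℝ)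
    (hC : ∀ x : EuclideanSpace ℝ (Fin d),
      C * ‖x‖ ^ (2 * t) = ∑ j, (inner ℝ x (v j) : ℝ) ^ (2 * t)) :
    C = (∏ j ∈ Finset.range t, (2 * (j : ℝ) + 1) / ((d : ℝ) + 2 * j)) *
          ∑ j, ‖v j‖ ^ (2 * t) ∧
    ∑ j, ∑ k, (inner ℝ (v j) (v k) : ℝ) ^ (2 * t) =
      (∏ j ∈ Finset.range t, (2 * (j : ℝ) + 1) / ((d : ℝ) + 2 * j)) *
        (∑ l, ‖v l‖ ^ (2 * t)) ^ 2 := by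
  haveI : NeZero d := ⟨by omega⟩
  set c : ℝ := ∏ j ∈ Finset.range t, (2 * (j : ℝ) + 1) / ((d : ℝ) + 2 * j) with hc
  set S : ℝ := ∑ j, ‖v j‖ ^ (2 * t) with hS
  set A : ℝ := ∫ x : EuclideanSpace ℝ (Fin d), ‖x‖ ^ (2 * t) * Real.exp (-‖x‖ ^ 2) with hA
  set B : ℝ := ∫ x : EuclideanSpace ℝ (Fin d), (x 0) ^ (2 * t) * Real.exp (-‖x‖ ^ 2) with hB
  set R : ℝ := (d : ℝ) * (volume (Metric.ball (0 : EuclideanSpace ℝ (Fin d)) 1)).toReal with hR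
  -- step 1: C * A = S * B
  have key1 : C * A = S * B := by
    calc C * A = ∫ x : EuclideanSpace ℝ (Fin d),
        C * (‖x‖ ^ (2 * t) * Real.exp (-‖x‖ ^ 2)) := (integral_const_mul _ _).symm
      _ = ∫ x : EuclideanSpace ℝ (Fin d),
          ∑ j, (inner ℝ x (v j) : ℝ) ^ (2 * t) * Real.exp (-‖x‖ ^ 2) := by
        refine integral_congr_ae (Filter.Eventually.of_forall fun x => ?_)
        dsimp only
        rw [← mul_assoc, hC x, Finset.sum_mul]
      _ = ∑ j, ∫ x : EuclideanSpace ℝ (Fin d),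
          (inner ℝ x (v j) : ℝ) ^ (2 * t) * Real.exp (-‖x‖ ^ 2) :=
        integral_finset_sum _ (fun j _ => int_inner d t (v j))
      _ = ∑ j, ‖v j‖ ^ (2 * t) * B := by
        refine Finset.sum_congr rfl fun j _ => ?_
        rw [gauss_rot d t ht (v j)]
      _ = S * B := by rw [← Finset.sum_mul]
  -- step 2: values of A and B
  have hAval : A = R * ((1 / 2) * Real.Gamma ((d : ℝ) / 2 + t)) := by
    rw [hA, gauss_radial d hd t]
    have : ((d : ℝ) + 2 * t) / 2 = (d : ℝ) / 2 + t := by ring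
    rw [this]
  have hBval : B = Real.Gamma (1 / 2 + t) * (∫ s : ℝ, Real.exp (-s ^ 2)) ^ (d - 1) := by
    rw [hB, gauss_pi d t, moment1d t]
    have : (2 * (t : ℝ) + 1) / 2 = 1 / 2 + t := by ring
    rw [this]
  have hG0 : (∫ s : ℝ, Real.exp (-s ^ 2)) = Real.Gamma (1 / 2) := by
    have := moment1d 0
    simpa using this
  have hA0 : R * ((1 / 2) * Real.Gamma ((d : ℝ) / 2))
      = Real.Gamma (1 / 2) * Real.Gamma (1 / 2) ^ (d - 1) := by
    have h1 := gauss_radial d hd 0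
    have h2 := gauss_pi d 0
    simp only [mul_zero, pow_zero, one_mul, Nat.cast_zero, add_zero] at h1 h2
    rw [h2] at h1
    rw [hR, ← h1, hG0]
  -- Gamma product expansions
  have hdpos : (0 : ℝ) < (d : ℝ) / 2 := by
    have : (0 : ℝ) < (d : ℝ) := by exact_mod_cast Nat.pos_of_ne_zero (by omega)
    linarith
  have hgd := Gamma_fact ((d : ℝ) / 2) hdpos t
  have hgh := Gamma_fact ((1 : ℝ) / 2) (by norm_num) t
  -- positivity facts
  have hGd : 0 < Real.Gamma ((d : ℝ) / 2) := Real.Gamma_pos_of_pos hdpos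
  have hRpos : 0 < R := by
    rw [hR]
    have h1 : (0 : ℝ) < (d : ℝ) := by exact_mod_cast Nat.pos_of_ne_zero (by omega)
    have h2 : 0 < (volume (Metric.ball (0 : EuclideanSpace ℝ (Fin d)) 1)).toReal := by
      refine ENNReal.toReal_pos ?_ ?_
      · exact (Metric.measure_ball_pos volume 0 one_pos).ne'
      · exact (measure_ball_lt_top).ne
    positivity
  have hPpos : 0 < R * ((1 / 2) * Real.Gamma ((d : ℝ) / 2)) := by positivity
  have hprodpos : 0 < ∏ j ∈ Finset.range t, ((d : ℝ) / 2 + j) := by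
    refine Finset.prod_pos fun j _ => ?_
    have : (0 : ℝ) ≤ (j : ℝ) := Nat.cast_nonneg j
    linarith
  -- derive C * ∏(d/2+j) = S * ∏(1/2+j)
  have key2 : C * (∏ j ∈ Finset.range t, ((d : ℝ) / 2 + j))
      = S * (∏ j ∈ Finset.range t, ((1 : ℝ) / 2 + j)) := by
    have h3 : C * (∏ j ∈ Finset.range t, ((d : ℝ) / 2 + j))
          * (R * ((1 / 2) * Real.Gamma ((d : ℝ) / 2)))
        = S * (∏ j ∈ Finset.range t, ((1 : ℝ) / 2 + j))
          * (R * ((1 / 2) * Real.Gamma ((d : ℝ) / 2))) := by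
      calc C * (∏ j ∈ Finset.range t, ((d : ℝ) / 2 + j))
            * (R * ((1 / 2) * Real.Gamma ((d : ℝ) / 2)))
          = C * (R * ((1 / 2) * Real.Gamma ((d : ℝ) / 2 + t))) := by rw [hgd]; ring
        _ = C * A := by rw [hAval]
        _ = S * B := key1
        _ = S * (Real.Gamma (1 / 2 + t) * Real.Gamma (1 / 2) ^ (d - 1)) := by
            rw [hBval, hG0]
        _ = S * (∏ j ∈ Finset.range t, ((1 : ℝ) / 2 + j))
            * (Real.Gamma (1 / 2) * Real.Gamma (1 / 2) ^ (d - 1)) := by rw [hgh]; ring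
        _ = S * (∏ j ∈ Finset.range t, ((1 : ℝ) / 2 + j))
            * (R * ((1 / 2) * Real.Gamma ((d : ℝ) / 2))) := by rw [hA0]
    exact mul_right_cancel₀ hPpos.ne' h3
  -- conclude C = c * S
  have hCval : C = c * S := by
    have hcc : c = (∏ j ∈ Finset.range t, ((1 : ℝ) / 2 + j))
        / (∏ j ∈ Finset.range t, ((d : ℝ) / 2 + j)) := by
      rw [hc, ← Finset.prod_div_distrib]
      refine Finset.prod_congr rfl fun j _ => ?_
      have h1 : (0 : ℝ) < (d : ℝ) + 2 * j := by
        have : (0 : ℝ) < (d : ℝ) := by exact_mod_cast Nat.pos_of_ne_zero (by omega)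
        have : (0 : ℝ) ≤ (j : ℝ) := Nat.cast_nonneg j
        linarith
      have h2 : (0 : ℝ) < (d : ℝ) / 2 + j := by linarith
      rw [div_eq_div_iff h1.ne' h2.ne']
      ring
    rw [hcc, div_mul_eq_mul_div, eq_div_iff hprodpos.ne']
    linear_combination key2
  refine ⟨hCval, ?_⟩
  have hsum : ∑ j, ∑ k, (inner ℝ (v j) (v k) : ℝ) ^ (2 * t) = C * S := by
    rw [hS, Finset.mul_sum]
    refine Finset.sum_congr rfl fun j _ => ?_
    rw [← hC (v j)]
  rw [hsum, hCval]
  ring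
end

section
/- Let t ≥ 1 and let v_k = (cos(kπ/(t+1)), sin(kπ/(t+1))) ∈ ℝ² for k = 0, 1, …, t, so that v₀,…,v_t span t+1 equally spaced lines in ℝ². Then (v_k) is a spherical (t,t)-design for ℝ²: Σ_{j=0}^{t} Σ_{k=0}^{t} |⟨v_j,v_k⟩|^{2t} = c_t(ℝ²)·(t+1)², where c_t(ℝ²) = ∏_{j=0}^{t-1} (2j+1)/(2j+2) = binom(2t,t)/4^t. -/
open Real Finset

lemma prod_id (t : ℕ) : (∏ j ∈ Finset.range t, (2 * (j : ℝ) + 1) / (2 * j + 2)) =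
    (Nat.choose (2 * t) t : ℝ) / 4 ^ t := by
  induction t with
  | zero => simp
  | succ n ih =>
      rw [Finset.prod_range_succ, ih]
      have h := Nat.succ_mul_centralBinom_succ n
      rw [Nat.centralBinom, Nat.centralBinom] at h
      have h' : ((n:ℝ)+1) * (Nat.choose (2*(n+1)) (n+1) : ℝ) = 2*(2*n+1) * (Nat.choose (2*n) n : ℝ) := by
        exact_mod_cast congrArg (Nat.cast : ℕ → ℝ) h
      have hn : ((n:ℝ)+1) ≠ 0 := by positivity
      field_simp at h' ⊢
      linear_combination (-2) * (4:ℝ)^n * h'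


lemma cos_pow_expand (t : ℕ) (z : ℂ) :
    Complex.cos z ^ (2*t) =
      (∑ m ∈ Finset.range (2*t+1),
        (Nat.choose (2*t) m : ℂ) * Complex.exp ((2*(m:ℂ) - 2*t) * z * Complex.I)) / 4^t := by
  have h4 : (4:ℂ)^t = 2^(2*t) := by rw [pow_mul]; norm_num
  rw [Complex.cos, div_pow, add_pow, h4]
  congr 1
  refine Finset.sum_congr rfl fun m hm => ?_
  have hm' : m ≤ 2*t := Nat.lt_succ_iff.mp (Finset.mem_range.mp hm)
  rw [← Complex.exp_nat_mul, ← Complex.exp_nat_mul, ← Complex.exp_add, mul_comm]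
  congr 1
  rw [Nat.cast_sub hm']
  push_cast
  ring

lemma key_s16 (t : ℕ) (a : ℂ) :
    ∑ k ∈ Finset.range (t+1),
        Complex.cos ((a - k) * (Real.pi : ℂ) / (t+1)) ^ (2*t)
      = ((t:ℂ)+1) * (Nat.choose (2*t) t) / 4^t := by
  have hn : ((t:ℂ)+1) ≠ 0 := Nat.cast_add_one_ne_zero t
  have hπI : (Real.pi : ℂ) * Complex.I ≠ 0 := by
    simp [Real.pi_ne_zero, Complex.I_ne_zero, Complex.ofReal_ne_zero]
  simp_rw [cos_pow_expand]
  rw [← Finset.sum_div, Finset.sum_comm]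
  congr 1
  rw [Finset.sum_eq_single t]
  · rw [show 2*(t:ℂ) - 2*t = 0 by ring]
    simp [mul_comm]
  · intro m hm hmt
    have hm' : m ≤ 2*t := Nat.lt_succ_iff.mp (Finset.mem_range.mp hm)
    set c : ℂ := 2*(m:ℂ) - 2*t with hc
    set u : ℂ := Complex.exp (-(c * (Real.pi:ℂ) * Complex.I / (t+1))) with hu
    have hrw : ∀ k ∈ Finset.range (t+1),
        (Nat.choose (2*t) m : ℂ) * Complex.exp (c * ((a - k) * (Real.pi:ℂ) / (t+1)) * Complex.I)
        = ((Nat.choose (2*t) m : ℂ) * Complex.exp (c * a * (Real.pi:ℂ) * Complex.I / (t+1))) * u ^ k := by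
      intro k _
      rw [hu, ← Complex.exp_nat_mul, mul_assoc ((Nat.choose (2*t) m : ℂ)), ← Complex.exp_add]
      congr 2
      field_simp
      ring
    rw [Finset.sum_congr rfl hrw, ← Finset.mul_sum]
    have hu1 : u ≠ 1 := by
      rw [hu]
      intro h
      rw [Complex.exp_eq_one_iff] at h
      obtain ⟨z, hz⟩ := h
      field_simp at hz
      have hz2 : (-c) * ((Real.pi:ℂ) * Complex.I) = (2 * z * ((t:ℂ)+1)) * ((Real.pi:ℂ) * Complex.I) := by
        linear_combination ((Real.pi:ℂ) * Complex.I) * hz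
      have hz3 : -c = 2 * z * ((t:ℂ)+1) := mul_right_cancel₀ hπI hz2
      have hint : (2*((t:ℤ) - m) : ℤ) = ((2 * z * ((t:ℤ)+1) : ℤ)) := by
        have : ((2*((t:ℤ) - m) : ℤ) : ℂ) = ((2 * z * ((t:ℤ)+1) : ℤ) : ℂ) := by
          push_cast
          rw [hc] at hz3
          linear_combination hz3
        exact_mod_cast this
      have hdvd : ((t:ℤ)+1) ∣ ((m:ℤ) - t) := ⟨-z, by linarith [hint]⟩
      have habs : |(m:ℤ) - t| < (t:ℤ)+1 := by
        rw [abs_lt]; omega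
      have := Int.eq_zero_of_abs_lt_dvd hdvd habs
      omega
    have hgeom : ∑ k ∈ Finset.range (t+1), u ^ k = 0 := by
      rw [geom_sum_eq hu1]
      have hup : u ^ (t+1) = 1 := by
        rw [hu, ← Complex.exp_nat_mul]
        have harg : ((t+1 : ℕ) : ℂ) * -(c * (Real.pi:ℂ) * Complex.I / ((t:ℂ)+1))
            = (((t:ℤ) - (m:ℤ) : ℤ) : ℂ) * (2 * (Real.pi:ℂ) * Complex.I) := by
          push_cast
          rw [hc]
          field_simp
          ring
        rw [harg]
        exact Complex.exp_int_mul_two_pi_mul_I _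
      rw [hup]
      simp
    rw [hgeom, mul_zero]
  · intro h
    exact absurd (Finset.mem_range.mpr (by omega)) h

lemma key_real (t : ℕ) (a : ℝ) :
    ∑ k ∈ Finset.range (t+1), Real.cos ((a - k) * Real.pi / (t+1)) ^ (2*t)
      = ((t:ℝ)+1) * (Nat.choose (2*t) t) / 4^t := by
  have h := key_s16 t (a : ℂ)
  have h2 : ((∑ k ∈ Finset.range (t+1), Real.cos ((a - k) * Real.pi / (t+1)) ^ (2*t) : ℝ) : ℂ)
      = ∑ k ∈ Finset.range (t+1), Complex.cos (((a:ℂ) - k) * (Real.pi : ℂ) / (t+1)) ^ (2*t) := by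
    push_cast [Complex.ofReal_cos]
    norm_num
  apply Complex.ofReal_injective
  rw [h2, h]
  push_cast
  ring


/-- The `t+1` equally spaced lines in `ℝ²`, spanned by
`v_k = (cos(kπ/(t+1)), sin(kπ/(t+1)))`, form a spherical `(t,t)`-design for `ℝ²`:
`Σ_j Σ_k |⟨v_j,v_k⟩|^{2t} = c_t(ℝ²)·(t+1)²`, where
`c_t(ℝ²) = Π_{j=0}^{t-1}(2j+1)/(2j+2) = C(2t,t)/4ᵗ`. -/
theorem equally_spaced_lines_design (t : ℕ) (ht : 1 ≤ t)
    (v : Fin (t + 1) → Fin 2 → ℝ)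
    (hv : ∀ k, v k = ![Real.cos ((k : ℕ) * Real.pi / (t + 1)),
                       Real.sin ((k : ℕ) * Real.pi / (t + 1))]) :
    ∑ j : Fin (t + 1), ∑ k : Fin (t + 1), |∑ i, v j i * v k i| ^ (2 * t) =
      (∏ j ∈ Finset.range t, (2 * (j : ℝ) + 1) / (2 * j + 2)) * ((t : ℝ) + 1) ^ 2 ∧
    (∏ j ∈ Finset.range t, (2 * (j : ℝ) + 1) / (2 * j + 2)) =
      (Nat.choose (2 * t) t : ℝ) / 4 ^ t := by
  refine ⟨?_, prod_id t⟩
  have hip : ∀ j k : Fin (t+1), ∑ i, v j i * v k i =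
      Real.cos ((((j:ℕ):ℝ) - (k:ℕ)) * Real.pi / (t+1)) := by
    intro j k
    rw [Fin.sum_univ_two, hv j, hv k]
    simp only [Matrix.cons_val_zero, Matrix.cons_val_one, Matrix.head_cons]
    rw [← Real.cos_sub]
    congr 1
    ring
  have habs : ∀ j k : Fin (t+1), |∑ i, v j i * v k i| ^ (2*t) =
      Real.cos ((((j:ℕ):ℝ) - (k:ℕ)) * Real.pi / (t+1)) ^ (2*t) := by
    intro j k
    rw [hip j k, Even.pow_abs (even_two_mul t)]
  calc ∑ j : Fin (t + 1), ∑ k : Fin (t + 1), |∑ i, v j i * v k i| ^ (2 * t)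
      = ∑ j : Fin (t+1), ∑ k ∈ Finset.range (t+1),
          Real.cos ((((j:ℕ):ℝ) - k) * Real.pi / (t+1)) ^ (2*t) := by
        refine Finset.sum_congr rfl fun j _ => ?_
        rw [← Fin.sum_univ_eq_sum_range (fun k => Real.cos ((((j:ℕ):ℝ) - k) * Real.pi / (t+1)) ^ (2*t))]
        exact Finset.sum_congr rfl fun k _ => habs j k
    _ = ∑ j : Fin (t+1), ((t:ℝ)+1) * (Nat.choose (2*t) t) / 4^t := by
        exact Finset.sum_congr rfl fun j _ => key_real t _
    _ = (∏ j ∈ Finset.range t, (2 * (j : ℝ) + 1) / (2 * j + 2)) * ((t : ℝ) + 1) ^ 2 := by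
        rw [Finset.sum_const, Finset.card_univ, Fintype.card_fin, prod_id t, nsmul_eq_mul]
        push_cast
        ring
end

section
/- Let t ≥ 1, d ≥ 1, and let v₁,…,vₙ ∈ ℝ^d be arbitrary vectors. Then Σ_{j=1}^{n} Σ_{k=1}^{n} ⟨v_j,v_k⟩^{2t} ≥ c_t(ℝ^d)·(Σ_{ℓ=1}^{n} ‖v_ℓ‖^{2t})², where c_t(ℝ^d) = ∏_{j=0}^{t-1} (2j+1)/(d+2j) = (1·3·5⋯(2t−1))/(d(d+2)⋯(d+2(t−1))). -/
open Real Finset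

namespace WelchAux

set_option maxHeartbeats 1000000

/-- `G n = (n-1)!!` for even `n`, `0` for odd `n` (Gaussian moments). -/
noncomputable def G : ℕ → ℝ
  | 0 => 1
  | 1 => 0
  | (n+2) => (n+1) * G n

lemma G_add_two (n : ℕ) : G (n+2) = (n+1) * G n := by simp [G]

lemma G_succ (n : ℕ) : G (n+1) = n * G (n-1) := by
  cases n with
  | zero => simp [G]
  | succ k => rw [show k+1+1 = k+2 from rfl, G_add_two]; push_cast; simp

variable {d : ℕ}

noncomputable def Bc (nn : Fin d → ℕ) : ℝ := ∏ c, G (nn c)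

def cnt {m : ℕ} (β : Fin m → Fin d) (c : Fin d) : ℕ := ∑ i, if β i = c then 1 else 0

noncomputable def Bt {m : ℕ} (β : Fin m → Fin d) : ℝ := Bc (cnt β)

lemma cnt_cons {m : ℕ} (c : Fin d) (β : Fin m → Fin d) (c' : Fin d) :
    cnt (Fin.cons c β) c' = (if c = c' then 1 else 0) + cnt β c' := by
  simp only [cnt, Fin.sum_univ_succ, Fin.cons_zero, Fin.cons_succ]

lemma cnt_removeNth {m : ℕ} (β : Fin (m+1) → Fin d) (i : Fin (m+1)) (c' : Fin d) :
    cnt β c' = (if β i = c' then 1 else 0) + cnt (i.removeNth β) c' := by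
  exact
    Fin.sum_univ_succAbove (fun j => if β j = c' then (1:ℕ) else 0) i

lemma sum_cnt {m : ℕ} (β : Fin m → Fin d) : ∑ c, cnt β c = m := by
  unfold cnt
  rw [Finset.sum_comm]
  simp [Finset.sum_ite_eq]

lemma Bc_update (nn : Fin d → ℕ) (c : Fin d) (k : ℕ) :
    Bc (Function.update nn c k) = G k * ∏ c' ∈ univ.erase c, G (nn c') := by
  unfold Bc
  rw [← Finset.mul_prod_erase univ (fun c' => G (Function.update nn c k c')) (Finset.mem_univ c),
    Function.update_self]
  congr 1
  exact Finset.prod_congr rfl (fun x hx => by rw [Function.update_of_ne (Finset.mem_erase.mp hx).1])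

lemma Bc_update_two (nn : Fin d → ℕ) (c : Fin d) :
    Bc (Function.update nn c (nn c + 2)) = (nn c + 1) * Bc nn := by
  rw [Bc_update, G_add_two, show Bc nn = G (nn c) * ∏ c' ∈ univ.erase c, G (nn c') from
    (Finset.mul_prod_erase univ (fun c' => G (nn c')) (Finset.mem_univ c)).symm]
  ring

lemma isserlis {m : ℕ} (c : Fin d) (β : Fin (m+1) → Fin d) :
    Bt (Fin.cons c β) = ∑ i : Fin (m+1), if β i = c then Bt (i.removeNth β) else 0 := by
  have hc : cnt (Fin.cons c β) = Function.update (cnt β) c (cnt β c + 1) := by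
    funext c'
    rw [cnt_cons, Function.update_apply]
    by_cases h : c' = c
    · subst h; simp; omega
    · simp [h, show ¬ c = c' from fun hh => h hh.symm]
  have hL : Bt (Fin.cons c β) = (cnt β c : ℝ) * Bc (Function.update (cnt β) c (cnt β c - 1)) := by
    unfold Bt
    rw [hc, Bc_update, Bc_update, G_succ]
    ring
  have hR : ∀ i : Fin (m+1), β i = c →
      Bt (i.removeNth β) = Bc (Function.update (cnt β) c (cnt β c - 1)) := by
    intro i hi
    unfold Bt
    congr 1
    funext c'
    have h := cnt_removeNth β i c'
    rw [Function.update_apply]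
    by_cases hcc : c' = c
    · subst hcc; simp [hi] at h ⊢; omega
    · have : ¬ (β i = c') := fun hh => hcc (hi ▸ hh.symm)
      simp [this] at h
      simp [hcc, h]
  rw [hL]
  have key : ∀ i : Fin (m+1), (if β i = c then Bt (i.removeNth β) else 0)
      = (if β i = c then (1:ℝ) else 0) * Bc (Function.update (cnt β) c (cnt β c - 1)) := by
    intro i
    split_ifs with h
    · rw [hR i h, one_mul]
    · rw [zero_mul]
  rw [Finset.sum_congr rfl (fun i _ => key i), ← Finset.sum_mul]
  congr 1
  unfold cnt
  push_cast
  rfl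

noncomputable def S1 {d : ℕ} (m : ℕ) (v : Fin d → ℝ) : ℝ :=
  ∑ β : Fin m → Fin d, Bt β * ∏ i, v (β i)

noncomputable def S2 (d m : ℕ) : ℝ := ∑ β : Fin m → Fin d, (Bt β)^2

lemma S1_step (m : ℕ) (v : Fin d → ℝ) :
    S1 (m+2) v = ((m:ℝ)+1) * (∑ c, v c ^ 2) * S1 m v := by
  calc S1 (m+2) v
      = ∑ p : Fin d × (Fin (m+1) → Fin d), Bt (Fin.cons p.1 p.2) * ∏ i : Fin (m+2), v ((Fin.cons p.1 p.2 : Fin (m+2) → Fin d) i) := by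
        rw [S1, ← Equiv.sum_comp (Fin.consEquiv (fun _ => Fin d))
          (fun β => Bt β * ∏ i, v (β i))]
        rfl
    _ = ∑ c : Fin d, ∑ β : Fin (m+1) → Fin d, ∑ i : Fin (m+1),
          (if β i = c then Bt (i.removeNth β) * (v c * ∏ j, v (β j)) else 0) := by
        rw [Fintype.sum_prod_type]
        refine Finset.sum_congr rfl fun c _ => Finset.sum_congr rfl fun β _ => ?_
        rw [isserlis, Fin.prod_univ_succ]
        simp only [Fin.cons_zero, Fin.cons_succ]
        rw [Finset.sum_mul]
        exact Finset.sum_congr rfl fun i _ => by split_ifs <;> simp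
    _ = ∑ β : Fin (m+1) → Fin d, ∑ i : Fin (m+1),
          Bt (i.removeNth β) * (v (β i) * ∏ j, v (β j)) := by
        rw [Finset.sum_comm]
        refine Finset.sum_congr rfl fun β _ => ?_
        rw [Finset.sum_comm]
        refine Finset.sum_congr rfl fun i _ => ?_
        simpa using Finset.sum_ite_eq univ (β i)
          (fun c => Bt (i.removeNth β) * (v c * ∏ j, v (β j)))
    _ = ∑ i : Fin (m+1), ∑ β : Fin (m+1) → Fin d,
          Bt (i.removeNth β) * (v (β i))^2 * ∏ j, v (i.removeNth β j) := by
        rw [Finset.sum_comm]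
        refine Finset.sum_congr rfl fun i _ => Finset.sum_congr rfl fun β _ => ?_
        rw [Fin.prod_univ_succAbove (fun j => v (β j)) i]
        unfold Fin.removeNth
        ring
    _ = ∑ i : Fin (m+1), ∑ p : Fin d × (Fin m → Fin d),
          Bt p.2 * (v p.1)^2 * ∏ j, v (p.2 j) := by
        refine Finset.sum_congr rfl fun i _ => ?_
        rw [← Equiv.sum_comp (Fin.insertNthEquiv (fun _ => Fin d) i)
          (fun β => Bt (i.removeNth β) * (v (β i))^2 * ∏ j, v (i.removeNth β j))]
        rw [Fintype.sum_prod_type, Fintype.sum_prod_type]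
        refine Finset.sum_congr rfl fun a _ => Finset.sum_congr rfl fun γ _ => ?_
        rw [show (Fin.insertNthEquiv (fun _ => Fin d) i) (a, γ) = i.insertNth a γ from rfl,
          Fin.removeNth_insertNth, Fin.insertNth_apply_same]
    _ = ((m:ℝ)+1) * (∑ c, v c ^ 2) * S1 m v := by
        rw [Finset.sum_congr rfl (fun (i : Fin (m+1)) _ => show
            (∑ p : Fin d × (Fin m → Fin d), Bt p.2 * (v p.1)^2 * ∏ j, v (p.2 j))
              = (∑ c, v c ^ 2) * S1 m v by
          rw [Fintype.sum_prod_type, Finset.sum_mul]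
          refine Finset.sum_congr rfl fun a _ => ?_
          rw [S1, Finset.mul_sum]
          exact Finset.sum_congr rfl fun γ _ => by ring)]
        rw [Finset.sum_const, Finset.card_univ, Fintype.card_fin, nsmul_eq_mul]
        push_cast
        ring

lemma cnt_insertNth {m : ℕ} (i : Fin (m+1)) (a : Fin d) (γ : Fin m → Fin d) (c' : Fin d) :
    cnt (i.insertNth a γ) c' = (if a = c' then 1 else 0) + cnt γ c' := by
  have h := cnt_removeNth (i.insertNth a γ) i c'
  rwa [Fin.insertNth_apply_same, Fin.removeNth_insertNth] at h

lemma Bt_cons_insertNth {m : ℕ} (i : Fin (m+1)) (a : Fin d) (γ : Fin m → Fin d) :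
    Bt (Fin.cons a (i.insertNth a γ)) = ((cnt γ a : ℝ) + 1) * Bt γ := by
  have hc : cnt (Fin.cons a (i.insertNth a γ)) = Function.update (cnt γ) a (cnt γ a + 2) := by
    funext c'
    rw [cnt_cons, cnt_insertNth, Function.update_apply]
    by_cases h : c' = a
    · subst h; simp; omega
    · simp [h, show ¬ a = c' from fun hh => h hh.symm]
  rw [Bt, hc, Bc_update_two]
  rfl

lemma S2_step (m : ℕ) : S2 d (m+2) = ((m:ℝ)+1) * ((d:ℝ) + m) * S2 d m := by
  calc S2 d (m+2)
      = ∑ p : Fin d × (Fin (m+1) → Fin d), (Bt (Fin.cons p.1 p.2))^2 := by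
        rw [S2, ← Equiv.sum_comp (Fin.consEquiv (fun _ => Fin d)) (fun β => (Bt β)^2)]
        rfl
    _ = ∑ c : Fin d, ∑ β : Fin (m+1) → Fin d, ∑ i : Fin (m+1),
          (if β i = c then Bt (Fin.cons c β) * Bt (i.removeNth β) else 0) := by
        rw [Fintype.sum_prod_type]
        refine Finset.sum_congr rfl fun c _ => Finset.sum_congr rfl fun β _ => ?_
        rw [sq]
        nth_rewrite 2 [isserlis]
        rw [Finset.mul_sum]
        exact Finset.sum_congr rfl fun i _ => by rw [mul_ite, mul_zero]
    _ = ∑ β : Fin (m+1) → Fin d, ∑ i : Fin (m+1),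
          Bt (Fin.cons (β i) β) * Bt (i.removeNth β) := by
        rw [Finset.sum_comm]
        refine Finset.sum_congr rfl fun β _ => ?_
        rw [Finset.sum_comm]
        refine Finset.sum_congr rfl fun i _ => ?_
        simpa using Finset.sum_ite_eq univ (β i)
          (fun c => Bt (Fin.cons c β) * Bt (i.removeNth β))
    _ = ∑ i : Fin (m+1), ∑ p : Fin d × (Fin m → Fin d),
          ((cnt p.2 p.1 : ℝ) + 1) * (Bt p.2)^2 := by
        rw [Finset.sum_comm]
        refine Finset.sum_congr rfl fun i _ => ?_
        rw [← Equiv.sum_comp (Fin.insertNthEquiv (fun _ => Fin d) i)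
          (fun β => Bt (Fin.cons (β i) β) * Bt (i.removeNth β))]
        rw [Fintype.sum_prod_type, Fintype.sum_prod_type]
        refine Finset.sum_congr rfl fun a _ => Finset.sum_congr rfl fun γ _ => ?_
        rw [show (Fin.insertNthEquiv (fun _ => Fin d) i) (a, γ) = i.insertNth a γ from rfl,
          Fin.removeNth_insertNth, Fin.insertNth_apply_same, Bt_cons_insertNth, sq]
        ring
    _ = ((m:ℝ)+1) * ((d:ℝ) + m) * S2 d m := by
        rw [Finset.sum_congr rfl (fun (i : Fin (m+1)) _ => show
            (∑ p : Fin d × (Fin m → Fin d), ((cnt p.2 p.1 : ℝ) + 1) * (Bt p.2)^2)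
              = ((d:ℝ) + m) * S2 d m by
          rw [Fintype.sum_prod_type, Finset.sum_comm]
          have key : ∀ γ : Fin m → Fin d,
              (∑ a : Fin d, ((cnt γ a : ℝ) + 1) * (Bt γ)^2) = ((d:ℝ) + m) * (Bt γ)^2 := by
            intro γ
            rw [← Finset.sum_mul]
            congr 1
            have h1 : (∑ a : Fin d, ((cnt γ a : ℕ) : ℝ)) = (m : ℝ) := by
              rw [← Nat.cast_sum, sum_cnt]
            rw [Finset.sum_add_distrib, h1, Finset.sum_const, Finset.card_univ,
              Fintype.card_fin, nsmul_eq_mul, mul_one]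
            ring
          rw [Finset.sum_congr rfl fun γ _ => key γ, ← Finset.mul_sum, S2])]
        rw [Finset.sum_const, Finset.card_univ, Fintype.card_fin, nsmul_eq_mul]
        push_cast
        ring

lemma S1_eval (t : ℕ) (v : Fin d → ℝ) :
    S1 (2*t) v = (∏ j ∈ range t, (2*(j:ℝ)+1)) * (∑ c, v c ^ 2)^t := by
  induction t with
  | zero => simp [S1, Bt, Bc, cnt, G]
  | succ k ih =>
      rw [show 2*(k+1) = 2*k+2 from by ring, S1_step, ih, Finset.prod_range_succ]
      push_cast
      ring

lemma S2_eval (t : ℕ) :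
    S2 d (2*t) = ∏ j ∈ range t, ((2*(j:ℝ)+1) * ((d:ℝ) + 2*j)) := by
  induction t with
  | zero => simp [S2, Bt, Bc, cnt, G]
  | succ k ih =>
      rw [show 2*(k+1) = 2*k+2 from by ring, S2_step, ih, Finset.prod_range_succ]
      push_cast
      ring

end WelchAux

open WelchAux in
/-- The generalized Welch bound for real vectors: for any `v₁,…,vₙ ∈ ℝᵈ`,
`Σ_j Σ_k ⟨v_j,v_k⟩^{2t} ≥ c_t(ℝᵈ)·(Σ_ℓ ‖v_ℓ‖^{2t})²`, where
`c_t(ℝᵈ) = Π_{j=0}^{t-1}(2j+1)/(d+2j)`. -/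
theorem generalized_welch_bound (t d n : ℕ) (ht : 1 ≤ t) (hd : 1 ≤ d)
    (v : Fin n → EuclideanSpace ℝ (Fin d)) :
    (∏ j ∈ Finset.range t, (2 * (j : ℝ) + 1) / ((d : ℝ) + 2 * j)) *
        (∑ l, ‖v l‖ ^ (2 * t)) ^ 2 ≤
      ∑ j, ∑ k, (inner ℝ (v j) (v k) : ℝ) ^ (2 * t) := by
  classical
  set P : ℝ := ∏ j ∈ range t, (2*(j:ℝ)+1) with hPdef
  set Q : ℝ := ∏ j ∈ range t, ((d:ℝ) + 2*j) with hQdef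
  have hPpos : 0 < P := Finset.prod_pos (fun j _ => by positivity)
  have hQpos : 0 < Q := Finset.prod_pos (fun j _ => by
    have h1 : (1:ℝ) ≤ (d:ℝ) := by exact_mod_cast hd
    have h2 : (0:ℝ) ≤ 2*(j:ℝ) := by positivity
    linarith)
  have hC : (∏ j ∈ Finset.range t, (2*(j:ℝ)+1)/((d:ℝ)+2*j)) = P / Q := by
    rw [hPdef, hQdef, ← Finset.prod_div_distrib]
  set A : (Fin (2*t) → Fin d) → ℝ := fun α => ∑ j, ∏ i, (v j) (α i) with hA
  have hnorm : ∀ w : EuclideanSpace ℝ (Fin d), ‖w‖^(2*t) = (∑ c, w c ^ 2)^t := by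
    intro w
    rw [pow_mul]
    congr 1
    rw [EuclideanSpace.norm_eq, Real.sq_sqrt (Finset.sum_nonneg fun c _ => sq_nonneg _)]
    exact Finset.sum_congr rfl fun c _ => by rw [Real.norm_eq_abs, sq_abs]
  have hinner : ∀ j k, (inner ℝ (v j) (v k) : ℝ) = ∑ c, v j c * v k c := by
    intro j k
    rw [PiLp.inner_apply]
    exact Finset.sum_congr rfl fun c _ => by
      rw [RCLike.inner_apply, conj_trivial, mul_comm]
  have h1 : ∑ α : Fin (2*t) → Fin d, A α * Bt α = P * ∑ l, ‖v l‖^(2*t) := by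
    calc ∑ α : Fin (2*t) → Fin d, A α * Bt α
        = ∑ α : Fin (2*t) → Fin d, ∑ j, Bt α * ∏ i, v j (α i) := by
          refine Finset.sum_congr rfl fun α _ => ?_
          rw [hA, Finset.sum_mul]
          exact Finset.sum_congr rfl fun j _ => by ring
      _ = ∑ j, ∑ α : Fin (2*t) → Fin d, Bt α * ∏ i, v j (α i) := Finset.sum_comm
      _ = ∑ j, S1 (2*t) (fun c => v j c) := rfl
      _ = ∑ j, P * (∑ c, (v j c)^2)^t := by
          exact Finset.sum_congr rfl fun j _ => by rw [S1_eval]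
      _ = P * ∑ l, ‖v l‖^(2*t) := by
          rw [Finset.mul_sum]
          exact Finset.sum_congr rfl fun l _ => by rw [hnorm]
  have h2 : ∑ α : Fin (2*t) → Fin d, (A α)^2
      = ∑ j, ∑ k, (inner ℝ (v j) (v k) : ℝ)^(2*t) := by
    calc ∑ α : Fin (2*t) → Fin d, (A α)^2
        = ∑ α : Fin (2*t) → Fin d, ∑ j, ∑ k, ∏ i, (v j (α i) * v k (α i)) := by
          refine Finset.sum_congr rfl fun α _ => ?_
          rw [sq, hA, Finset.sum_mul_sum]
          exact Finset.sum_congr rfl fun j _ => Finset.sum_congr rfl fun k _ =>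
            (Finset.prod_mul_distrib).symm
      _ = ∑ j, ∑ k, ∑ α : Fin (2*t) → Fin d, ∏ i, (v j (α i) * v k (α i)) := by
          rw [Finset.sum_comm]
          exact Finset.sum_congr rfl fun j _ => Finset.sum_comm
      _ = ∑ j, ∑ k, (inner ℝ (v j) (v k) : ℝ)^(2*t) := by
          refine Finset.sum_congr rfl fun j _ => Finset.sum_congr rfl fun k _ => ?_
          rw [← Fintype.prod_sum (fun (i : Fin (2*t)) (c : Fin d) => v j c * v k c),
            Finset.prod_const, Finset.card_univ, Fintype.card_fin, hinner]
  have h3 : ∑ α : Fin (2*t) → Fin d, (Bt α)^2 = P * Q := by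
    have := S2_eval (d := d) t
    rw [S2] at this
    rw [this, hPdef, hQdef, ← Finset.prod_mul_distrib]
  have hCS := Finset.sum_mul_sq_le_sq_mul_sq univ A Bt
  rw [h1, h2, h3] at hCS
  rw [hC]
  set S := ∑ l, ‖v l‖^(2*t) with hS
  set L := ∑ j, ∑ k, (inner ℝ (v j) (v k) : ℝ)^(2*t) with hL
  have h4 : P * (P * S^2) ≤ P * (L * Q) := by nlinarith [hCS]
  have h5 : P * S^2 ≤ L * Q := le_of_mul_le_mul_left h4 hPpos
  rw [div_mul_eq_mul_div, div_le_iff₀ hQpos]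
  exact h5
end

section
/- Let t ≥ 1, d ≥ 1, and let v₁,…,vₙ be unit vectors in ℝ^d. Then (v_j) is a spherical (t,t)-design for ℝ^d, i.e. Σ_{j=1}^n Σ_{k=1}^n ⟨v_j,v_k⟩^{2t} = c_t(ℝ^d)·n² with c_t(ℝ^d) = ∏_{j=0}^{t-1} (2j+1)/(d+2j), if and only if the cubature rule ∫_{S^{d−1}} p dσ = (1/n)·Σ_{j=1}^{n} p(v_j) holds for every homogeneous polynomial p : ℝ^d → ℝ of degree 2t, where σ is the normalized surface measure on the unit sphere S^{d−1} of ℝ^d. -/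
open Real Finset MeasureTheory

namespace SphDesign

abbrev Ed (d : ℕ) := EuclideanSpace ℝ (Fin d)
abbrev Sph (d : ℕ) := Metric.sphere (0 : Ed d) 1

lemma integ {d : ℕ} (σ : Measure (Sph d)) [IsFiniteMeasure σ] {g : Ed d → ℝ}
    (hg : Continuous g) : Integrable (fun x : Sph d => g ↑x) σ :=
  (hg.comp continuous_subtype_val).integrable_of_hasCompactSupport
    (HasCompactSupport.of_compactSpace _)

lemma cont_coord {d : ℕ} (i : Fin d) : Continuous fun x : Ed d => x i :=
  (continuous_apply i).comp (PiLp.continuous_ofLp ..)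

lemma cont_prod {d m : ℕ} (f : Fin m → Fin d) :
    Continuous fun x : Ed d => ∏ k, x (f k) :=
  continuous_finset_prod _ fun k _ => cont_coord (f k)

lemma norm_coe_sphere {d : ℕ} (x : Sph d) : ‖(x : Ed d)‖ = 1 := by
  have := x.2
  simpa [mem_sphere_iff_norm] using this

lemma sum_sq_eq_one {d : ℕ} (x : Sph d) : ∑ i, ((x : Ed d) i) ^ 2 = 1 := by
  have h : ‖(x : Ed d)‖ = 1 := norm_coe_sphere x
  have h2 := EuclideanSpace.norm_eq (x : Ed d)
  rw [h] at h2
  have h3 : ∑ i, ‖(x : Ed d) i‖ ^ 2 = 1 := by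
    nlinarith [Real.sq_sqrt (show (0:ℝ) ≤ ∑ i, ‖(x : Ed d) i‖ ^ 2 by positivity)]
  simpa [Real.norm_eq_abs, sq_abs] using h3

lemma sum_split {d : ℕ} (i0 i1 : Fin d) (h01 : i0 ≠ i1) (g : Fin d → ℝ) :
    ∑ j, g j = g i0 + g i1 + ∑ j ∈ (univ.erase i0).erase i1, g j := by
  rw [← Finset.add_sum_erase _ g (mem_univ i0),
    ← Finset.add_sum_erase _ g (show i1 ∈ univ.erase i0 by simp [Finset.mem_erase, h01.symm])]
  ring

def rotL (d : ℕ) (c s : ℝ) (i0 i1 : Fin d) : Ed d →ₗ[ℝ] Ed d where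
  toFun x := WithLp.toLp 2 (fun j => if j = i0 then c * x i0 - s * x i1
    else if j = i1 then s * x i0 + c * x i1 else x j)
  map_add' x y := by
    ext j
    simp only [PiLp.add_apply, PiLp.toLp_apply]
    split_ifs <;> ring
  map_smul' r x := by
    ext j
    simp only [PiLp.smul_apply, smul_eq_mul, RingHom.id_apply, PiLp.toLp_apply]
    split_ifs <;> ring

lemma rotL_apply {d : ℕ} (c s : ℝ) (i0 i1 : Fin d) (x : Ed d) (j : Fin d) :
    rotL d c s i0 i1 x j = if j = i0 then c * x i0 - s * x i1
      else if j = i1 then s * x i0 + c * x i1 else x j := rfl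

end SphDesign
namespace SphDesign

lemma rotL_norm {d : ℕ} (c s : ℝ) (h : c ^ 2 + s ^ 2 = 1) (i0 i1 : Fin d) (h01 : i0 ≠ i1)
    (x : Ed d) : ‖rotL d c s i0 i1 x‖ = ‖x‖ := by
  rw [EuclideanSpace.norm_eq, EuclideanSpace.norm_eq]
  congr 1
  simp only [Real.norm_eq_abs, sq_abs]
  rw [sum_split i0 i1 h01, sum_split i0 i1 h01 (fun j => (x j : ℝ) ^ 2)]
  have e0 : rotL d c s i0 i1 x i0 = c * x i0 - s * x i1 := by
    rw [rotL_apply]; simp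
  have e1 : rotL d c s i0 i1 x i1 = s * x i0 + c * x i1 := by
    rw [rotL_apply]; simp [h01.symm]
  rw [e0, e1]
  have e2 : ∑ j ∈ (Finset.univ.erase i0).erase i1, rotL d c s i0 i1 x j ^ 2
      = ∑ j ∈ (Finset.univ.erase i0).erase i1, (x j : ℝ) ^ 2 := by
    refine Finset.sum_congr rfl fun j hj => ?_
    simp only [Finset.mem_erase] at hj
    rw [rotL_apply]
    simp [hj.1, hj.2.1]
  rw [e2]
  nlinarith [h, sq_nonneg (x i0), sq_nonneg (x i1)]

noncomputable def rotIso (d : ℕ) (c s : ℝ) (h : c ^ 2 + s ^ 2 = 1) (i0 i1 : Fin d) (h01 : i0 ≠ i1) :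
    Ed d ≃ₗᵢ[ℝ] Ed d where
  toLinearEquiv := LinearEquiv.ofLinear (rotL d c s i0 i1) (rotL d c (-s) i0 i1)
    (by
      ext x j
      simp only [LinearMap.comp_apply, LinearMap.id_apply]
      rw [rotL_apply]
      by_cases h0 : j = i0
      · rw [if_pos h0, rotL_apply, rotL_apply]
        rw [if_pos rfl, if_neg h01.symm, if_pos rfl, h0]
        linear_combination x i0 * h
      · rw [if_neg h0]
        by_cases h1 : j = i1
        · rw [if_pos h1, rotL_apply, rotL_apply]
          rw [if_pos rfl, if_neg h01.symm, if_pos rfl, h1]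
          linear_combination x i1 * h
        · rw [if_neg h1, rotL_apply, if_neg h0, if_neg h1])
    (by
      ext x j
      simp only [LinearMap.comp_apply, LinearMap.id_apply]
      rw [rotL_apply]
      by_cases h0 : j = i0
      · rw [if_pos h0, rotL_apply, rotL_apply]
        rw [if_pos rfl, if_neg h01.symm, if_pos rfl, h0]
        linear_combination x i0 * h
      · rw [if_neg h0]
        by_cases h1 : j = i1
        · rw [if_pos h1, rotL_apply, rotL_apply]
          rw [if_pos rfl, if_neg h01.symm, if_pos rfl, h1]
          linear_combination x i1 * h
        · rw [if_neg h1, rotL_apply, if_neg h0, if_neg h1])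
  norm_map' := rotL_norm c s h i0 i1 h01

lemma rotIso_apply {d : ℕ} (c s : ℝ) (h : c ^ 2 + s ^ 2 = 1) (i0 i1 : Fin d) (h01 : i0 ≠ i1)
    (x : Ed d) (j : Fin d) :
    rotIso d c s h i0 i1 h01 x j = if j = i0 then c * x i0 - s * x i1
      else if j = i1 then s * x i0 + c * x i1 else x j := rfl

noncomputable def permIso (d : ℕ) (e : Equiv.Perm (Fin d)) : Ed d ≃ₗᵢ[ℝ] Ed d :=
  LinearIsometryEquiv.piLpCongrLeft 2 ℝ ℝ e

lemma permIso_apply {d : ℕ} (e : Equiv.Perm (Fin d)) (x : Ed d) (j : Fin d) :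
    permIso d e x j = x (e.symm j) := by
  simp [permIso, LinearIsometryEquiv.piLpCongrLeft_apply, Equiv.piCongrLeft'_apply]

end SphDesign
namespace SphDesign

variable {d : ℕ}

lemma moment_one (σ : Measure (Sph d)) [IsProbabilityMeasure σ]
    (hd1 : d = 1) (i : Fin d) (s : ℕ) :
    ∫ x, ((x : Ed d) i) ^ (2 * s) ∂σ = 1 := by
  have hpt : ∀ x : Sph d, ((x : Ed d) i) ^ (2 * s) = 1 := by
    intro x
    haveI hsub : Subsingleton (Fin d) := by rw [hd1]; infer_instance
    have h1 : ∑ i', ((x : Ed d) i') ^ 2 = ((x : Ed d) i) ^ 2 :=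
      Fintype.sum_subsingleton _ i
    have h2 := sum_sq_eq_one x
    rw [h1] at h2
    rw [pow_mul, h2, one_pow]
  rw [integral_congr_ae (Filter.Eventually.of_forall hpt)]
  simp

lemma step1 (σ : Measure (Sph d)) [IsProbabilityMeasure σ]
    (hinv : ∀ (e : Ed d ≃ₗᵢ[ℝ] Ed d) (f : Ed d → ℝ),
      ∫ x, f (e ↑x) ∂σ = ∫ x, f ↑x ∂σ)
    (i0 i1 : Fin d) (h01 : i0 ≠ i1) (m : ℕ) (hm : 1 ≤ m) :
    (2 * (m : ℝ) - 1) * ∫ x, ((x : Ed d) i0) ^ (2 * m - 2) * ((x : Ed d) i1) ^ 2 ∂σ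
      = ∫ x, ((x : Ed d) i0) ^ (2 * m) ∂σ := by
  set M : ℝ := ∫ x, ((x : Ed d) i0) ^ (2 * m) ∂σ with hM
  set A : ℕ → ℝ := fun k => ∫ x, ((x : Ed d) i0) ^ k * ((x : Ed d) i1) ^ (2 * m - k) ∂σ with hA
  have hint : ∀ k l : ℕ, Integrable (fun x : Sph d => ((x : Ed d) i0) ^ k * ((x : Ed d) i1) ^ l) σ :=
    fun k l => integ σ (((cont_coord i0).pow k).mul ((cont_coord i1).pow l))
  -- (a) invariance evaluation
  have key_a : ∀ a : ℝ, ∫ x, (a * (x : Ed d) i0 - (x : Ed d) i1) ^ (2 * m) ∂σ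
      = (a ^ 2 + 1) ^ m * M := by
    intro a
    have hr2 : Real.sqrt (a ^ 2 + 1) ^ 2 = a ^ 2 + 1 := Real.sq_sqrt (by positivity)
    set r : ℝ := Real.sqrt (a ^ 2 + 1) with hrdef
    have hr0 : 0 < r := Real.sqrt_pos.mpr (by positivity)
    have hcs : (a / r) ^ 2 + (1 / r) ^ 2 = 1 := by
      field_simp
      linarith [hr2]
    have hrot := hinv (rotIso d (a / r) (1 / r) hcs i0 i1 h01) (fun y => (y i0) ^ (2 * m))
    have hl : ∀ x : Sph d, ((rotIso d (a / r) (1 / r) hcs i0 i1 h01 (x : Ed d)) i0) ^ (2 * m)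
        = (a / r * (x : Ed d) i0 - 1 / r * (x : Ed d) i1) ^ (2 * m) := by
      intro x
      rw [rotIso_apply, if_pos rfl]
    rw [integral_congr_ae (Filter.Eventually.of_forall hl)] at hrot
    have hpt : ∀ x : Sph d, (a * (x : Ed d) i0 - (x : Ed d) i1) ^ (2 * m)
        = r ^ (2 * m) * (a / r * (x : Ed d) i0 - 1 / r * (x : Ed d) i1) ^ (2 * m) := by
      intro x
      rw [← mul_pow]
      congr 1
      field_simp
    rw [integral_congr_ae (Filter.Eventually.of_forall hpt), integral_const_mul _ _, hrot]
    have : r ^ (2 * m) = (a ^ 2 + 1) ^ m := by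
      rw [pow_mul, hr2]
    rw [this, hM]
  -- (b) binomial expansion
  have key_b : ∀ a : ℝ, ∫ x, (a * (x : Ed d) i0 - (x : Ed d) i1) ^ (2 * m) ∂σ
      = ∑ k ∈ range (2 * m + 1),
          (((2 * m).choose k : ℝ) * (-1) ^ (2 * m - k) * A k) * a ^ k := by
    intro a
    have hpt : ∀ x : Sph d, (a * (x : Ed d) i0 - (x : Ed d) i1) ^ (2 * m)
        = ∑ k ∈ range (2 * m + 1),
            (((2 * m).choose k : ℝ) * (-1) ^ (2 * m - k) * a ^ k) *
              (((x : Ed d) i0) ^ k * ((x : Ed d) i1) ^ (2 * m - k)) := by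
      intro x
      rw [sub_eq_add_neg, add_pow]
      refine Finset.sum_congr rfl fun k _ => ?_
      rw [mul_pow, neg_pow]
      ring
    rw [integral_congr_ae (Filter.Eventually.of_forall hpt)]
    rw [integral_finset_sum _ (fun k _ => ((hint k (2 * m - k)).const_mul _))]
    refine Finset.sum_congr rfl fun k _ => ?_
    rw [integral_const_mul _ _]
    ring
  -- polynomial identity
  set P : Polynomial ℝ := ∑ k ∈ range (2 * m + 1),
      Polynomial.C (((2 * m).choose k : ℝ) * (-1) ^ (2 * m - k) * A k) * Polynomial.X ^ k with hP
  set Q : Polynomial ℝ := Polynomial.C M * (Polynomial.X ^ 2 + 1) ^ m with hQ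
  have hPQ : P = Q := by
    apply Polynomial.funext
    intro a
    rw [hP, hQ]
    rw [Polynomial.eval_finset_sum]
    simp only [Polynomial.eval_mul, Polynomial.eval_C, Polynomial.eval_pow, Polynomial.eval_add,
      Polynomial.eval_X, Polynomial.eval_one]
    rw [← key_b a, key_a a]
    ring
  -- coefficients at 2*m-2
  have cP : P.coeff (2 * m - 2) = ((2 * m).choose (2 * m - 2) : ℝ) * A (2 * m - 2) := by
    rw [hP, Polynomial.finset_sum_coeff]
    rw [Finset.sum_eq_single (2 * m - 2)]
    · rw [Polynomial.coeff_C_mul, Polynomial.coeff_X_pow, if_pos rfl]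
      rw [show 2 * m - (2 * m - 2) = 2 by omega]
      ring
    · intro k hk hne
      rw [Polynomial.coeff_C_mul, Polynomial.coeff_X_pow, if_neg (fun h => hne h.symm), mul_zero]
    · intro h
      exact absurd (Finset.mem_range.mpr (by omega)) h
  have cQ : Q.coeff (2 * m - 2) = M * (m : ℝ) := by
    rw [hQ, Polynomial.coeff_C_mul]
    congr 1
    have hexp : ((Polynomial.X : Polynomial ℝ) ^ 2 + 1) ^ m
        = ∑ k ∈ range (m + 1), Polynomial.X ^ (2 * k) * Polynomial.C ((m.choose k : ℝ)) := by
      rw [add_pow]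
      refine Finset.sum_congr rfl fun k _ => ?_
      rw [one_pow, mul_one, ← pow_mul, Polynomial.C_eq_natCast]
    rw [hexp, Polynomial.finset_sum_coeff]
    rw [Finset.sum_eq_single (m - 1)]
    · rw [Polynomial.coeff_mul_C, Polynomial.coeff_X_pow,
        if_pos (by omega : 2 * m - 2 = 2 * (m - 1)), one_mul]
      rw [show m - 1 = m - 1 from rfl]
      have : m.choose (m - 1) = m := by
        rw [Nat.choose_symm (by omega : 1 ≤ m), Nat.choose_one_right]
      rw [this]
    · intro k hk hne
      rw [Polynomial.coeff_mul_C, Polynomial.coeff_X_pow,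
        if_neg (by simp only [Finset.mem_range] at hk; omega), zero_mul]
    · intro h
      exact absurd (Finset.mem_range.mpr (by omega)) h
  have hcoeff : ((2 * m).choose (2 * m - 2) : ℝ) * A (2 * m - 2) = M * (m : ℝ) := by
    rw [← cP, ← cQ, hPQ]
  have hch : (2 * m).choose (2 * m - 2) = m * (2 * m - 1) := by
    rw [Nat.choose_symm (by omega : 2 ≤ 2 * m), Nat.choose_two_right,
      show 2 * m * (2 * m - 1) = m * (2 * m - 1) * 2 by ring, Nat.mul_div_cancel _ (by omega)]
  rw [hch] at hcoeff
  have hcast : ((m * (2 * m - 1) : ℕ) : ℝ) = (m : ℝ) * (2 * (m : ℝ) - 1) := by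
    rw [Nat.cast_mul, Nat.cast_sub (by omega : 1 ≤ 2 * m)]
    push_cast
    ring
  rw [hcast] at hcoeff
  have hm0 : (m : ℝ) ≠ 0 := Nat.cast_ne_zero.mpr (by omega)
  have hgoal : (2 * (m : ℝ) - 1) * A (2 * m - 2) = M := by
    apply mul_left_cancel₀ hm0
    linear_combination hcoeff
  simp only [hA] at hgoal
  rw [show 2 * m - (2 * m - 2) = 2 by omega] at hgoal
  exact hgoal

end SphDesign
namespace SphDesign

variable {d : ℕ}

lemma step2 (σ : Measure (Sph d)) [IsProbabilityMeasure σ]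
    (hinv : ∀ (e : Ed d ≃ₗᵢ[ℝ] Ed d) (f : Ed d → ℝ),
      ∫ x, f (e ↑x) ∂σ = ∫ x, f ↑x ∂σ)
    (i0 i1 : Fin d) (h01 : i0 ≠ i1) (s : ℕ) :
    ∫ x, ((x : Ed d) i0) ^ (2 * s) ∂σ
      = (∫ x, ((x : Ed d) i0) ^ (2 * s + 2) ∂σ)
        + ((d : ℝ) - 1) * ∫ x, ((x : Ed d) i0) ^ (2 * s) * ((x : Ed d) i1) ^ 2 ∂σ := by
  have hint : ∀ i : Fin d, Integrable
      (fun x : Sph d => ((x : Ed d) i0) ^ (2 * s) * ((x : Ed d) i) ^ 2) σ :=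
    fun i => integ σ (((cont_coord i0).pow _).mul ((cont_coord i).pow _))
  have key : ∀ i : Fin d, i ≠ i0 →
      ∫ x, ((x : Ed d) i0) ^ (2 * s) * ((x : Ed d) i) ^ 2 ∂σ
        = ∫ x, ((x : Ed d) i0) ^ (2 * s) * ((x : Ed d) i1) ^ 2 ∂σ := by
    intro i hi
    by_cases hii : i = i1
    · rw [hii]
    · have h := hinv (permIso d (Equiv.swap i1 i))
        (fun y => (y i0) ^ (2 * s) * (y i1) ^ 2)
      have hl : ∀ x : Sph d,
          ((permIso d (Equiv.swap i1 i) (x : Ed d)) i0) ^ (2 * s)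
            * ((permIso d (Equiv.swap i1 i) (x : Ed d)) i1) ^ 2
          = ((x : Ed d) i0) ^ (2 * s) * ((x : Ed d) i) ^ 2 := by
        intro x
        rw [permIso_apply, permIso_apply, Equiv.symm_swap,
          Equiv.swap_apply_of_ne_of_ne (Ne.symm (fun hh => h01 hh.symm)) (Ne.symm hi),
          Equiv.swap_apply_left]
      rw [integral_congr_ae (Filter.Eventually.of_forall hl)] at h
      exact h
  have hsum : ∫ x, ((x : Ed d) i0) ^ (2 * s) ∂σ
      = ∑ i : Fin d, ∫ x, ((x : Ed d) i0) ^ (2 * s) * ((x : Ed d) i) ^ 2 ∂σ := by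
    rw [← integral_finset_sum _ (fun i _ => hint i)]
    refine integral_congr_ae (Filter.Eventually.of_forall fun x => ?_)
    dsimp only
    rw [← Finset.mul_sum, sum_sq_eq_one x, mul_one]
  rw [hsum, ← Finset.add_sum_erase _ _ (mem_univ i0)]
  congr 1
  · refine integral_congr_ae (Filter.Eventually.of_forall fun x => ?_)
    dsimp only
    rw [← pow_add]
  · rw [Finset.sum_congr rfl (fun i hi => key i (Finset.mem_erase.mp hi).1),
      Finset.sum_const, Finset.card_erase_of_mem (mem_univ i0), Finset.card_univ,
      Fintype.card_fin, nsmul_eq_mul, Nat.cast_sub (Nat.one_le_iff_ne_zero.mpr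
        (by rintro rfl; exact i0.elim0))]
    norm_num

lemma rec_step (σ : Measure (Sph d)) [IsProbabilityMeasure σ]
    (hinv : ∀ (e : Ed d ≃ₗᵢ[ℝ] Ed d) (f : Ed d → ℝ),
      ∫ x, f (e ↑x) ∂σ = ∫ x, f ↑x ∂σ)
    (hd : 0 < d) (s : ℕ) :
    ((d : ℝ) + 2 * s) * ∫ x, ((x : Ed d) ⟨0, hd⟩) ^ (2 * (s + 1)) ∂σ
      = (2 * (s : ℝ) + 1) * ∫ x, ((x : Ed d) ⟨0, hd⟩) ^ (2 * s) ∂σ := by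
  by_cases hd2 : 2 ≤ d
  · set i0 : Fin d := ⟨0, hd⟩
    set i1 : Fin d := ⟨1, by omega⟩
    have h01 : i0 ≠ i1 := by simp [i0, i1, Fin.ext_iff]
    have h1 := step1 σ hinv i0 i1 h01 (s + 1) (by omega)
    have h2 := step2 σ hinv i0 i1 h01 s
    rw [show 2 * (s + 1) - 2 = 2 * s by omega] at h1
    rw [show 2 * s + 2 = 2 * (s + 1) by omega] at h2
    push_cast at h1 ⊢
    linear_combination (-(2 * (s : ℝ) + 1)) * h2 - ((d : ℝ) - 1) * h1
  · have hd1 : d = 1 := by omega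
    rw [moment_one σ hd1, moment_one σ hd1]
    have hdc : (d : ℝ) = 1 := by rw [hd1]; norm_num
    rw [hdc]; ring

lemma moment_val (σ : Measure (Sph d)) [IsProbabilityMeasure σ]
    (hinv : ∀ (e : Ed d ≃ₗᵢ[ℝ] Ed d) (f : Ed d → ℝ),
      ∫ x, f (e ↑x) ∂σ = ∫ x, f ↑x ∂σ)
    (hd : 0 < d) (t : ℕ) :
    ∫ x, ((x : Ed d) ⟨0, hd⟩) ^ (2 * t) ∂σ
      = ∏ j ∈ range t, (2 * (j : ℝ) + 1) / ((d : ℝ) + 2 * j) := by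
  induction t with
  | zero => simp
  | succ t ih =>
    have h := rec_step σ hinv hd t
    have hpos : (0 : ℝ) < (d : ℝ) + 2 * t := by positivity
    rw [prod_range_succ, ← ih, ← mul_div_assoc, eq_div_iff hpos.ne']
    linear_combination h

lemma inner_moment (σ : Measure (Sph d)) [IsProbabilityMeasure σ]
    (hinv : ∀ (e : Ed d ≃ₗᵢ[ℝ] Ed d) (f : Ed d → ℝ),
      ∫ x, f (e ↑x) ∂σ = ∫ x, f ↑x ∂σ)
    (hd : 0 < d) (t : ℕ) (u : Ed d) (hu : ‖u‖ = 1) :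
    ∫ x, (inner ℝ (x : Ed d) u : ℝ) ^ (2 * t) ∂σ
      = ∏ j ∈ range t, (2 * (j : ℝ) + 1) / ((d : ℝ) + 2 * j) := by
  set i0 : Fin d := ⟨0, hd⟩
  set u0 : Ed d := EuclideanSpace.single i0 (1 : ℝ) with hu0
  have hnorm : ‖u0‖ = ‖u‖ := by
    rw [hu, hu0, EuclideanSpace.norm_single]
    norm_num
  set e := Submodule.reflection (Submodule.span ℝ {u0 - u})ᗮ with he_def
  have he : e u0 = u := Submodule.reflection_sub hnorm
  have h := hinv e (fun y => (inner ℝ y u : ℝ) ^ (2 * t))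
  have hl : ∀ x : Sph d, (inner ℝ (e (x : Ed d)) u : ℝ) ^ (2 * t)
      = ((x : Ed d) i0) ^ (2 * t) := by
    intro x
    rw [← he, LinearIsometryEquiv.inner_map_map, hu0, EuclideanSpace.inner_single_right]
    simp
  rw [integral_congr_ae (Filter.Eventually.of_forall hl)] at h
  rw [← h]
  exact moment_val σ hinv hd t

end SphDesign
namespace SphDesign

lemma inner_pow_expand {d : ℕ} (m : ℕ) (x y : Ed d) :
    (inner ℝ x y : ℝ) ^ m = ∑ f : Fin m → Fin d, (∏ k, x (f k)) * (∏ k, y (f k)) := by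
  classical
  rw [PiLp.inner_apply]
  simp only [RCLike.inner_apply', conj_trivial]
  have h1 : (∑ i, x i * y i) ^ m = ∏ _k : Fin m, (∑ i, x i * y i) := by
    rw [Finset.prod_const, Finset.card_univ, Fintype.card_fin]
  rw [h1, Finset.prod_univ_sum (fun _ => (univ : Finset (Fin d)))]
  rw [Fintype.piFinset_univ]
  exact Finset.sum_congr rfl fun f _ => Finset.prod_mul_distrib

lemma exists_fn {d N : ℕ} (α : Fin d →₀ ℕ) (hα : (α.sum fun _ e => e) = N) :
    ∃ f : Fin N → Fin d, ∀ x : Fin d → ℝ, (∏ i, x i ^ α i) = ∏ k, x (f k) := by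
  classical
  set l := α.toMultiset.toList with hl
  have hlen : l.length = N := by
    rw [hl, Multiset.length_toList, Finsupp.card_toMultiset]
    exact hα
  refine ⟨fun k => l.get (Fin.cast hlen.symm k), fun x => ?_⟩
  have h4 : (∏ k : Fin N, x (l.get (Fin.cast hlen.symm k)))
      = ∏ i : Fin l.length, x (l.get i) :=
    Fintype.prod_equiv (finCongr hlen.symm) _ _ (fun k => rfl)
  have h5 : (∏ i : Fin l.length, x (l.get i)) = (List.map x l).prod := by
    conv_rhs => rw [← List.ofFn_get l]
    rw [List.map_ofFn, List.prod_ofFn]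
    simp [Function.comp]
  have h6 : ((List.map x l : List ℝ) : Multiset ℝ).prod = (Multiset.map x α.toMultiset).prod := by
    rw [← Multiset.map_coe, hl, Multiset.coe_toList]
  have h2 : (Multiset.map x α.toMultiset).prod = ∏ i ∈ α.support, x i ^ α i := by
    rw [Finset.prod_multiset_map_count]
    exact Finset.prod_congr (Finsupp.toFinset_toMultiset α)
      (fun i _ => by rw [Finsupp.count_toMultiset])
  have h1 : ∏ i ∈ α.support, x i ^ α i = ∏ i, x i ^ α i := by
    refine Finset.prod_subset (Finset.subset_univ _) ?_
    intro i _ hi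
    rw [Finsupp.notMem_support_iff.mp hi, pow_zero]
  rw [h4, h5, ← Multiset.prod_coe, h6, h2, h1]

end SphDesign
open SphDesign in
/-- Unit vectors `v₁,…,vₙ ∈ ℝᵈ` form a spherical `(t,t)`-design
(`Σ_j Σ_k ⟨v_j,v_k⟩^{2t} = c_t(ℝᵈ)·n²`) if and only if the cubature rule
`∫_{S^{d−1}} p dσ = (1/n)·Σ_j p(v_j)` holds for every homogeneous polynomial `p` of
degree `2t`, where `σ` is the normalized (rotation-invariant) surface probability
measure on the unit sphere of `ℝᵈ`. -/
theorem design_iff_cubature (t d n : ℕ) (ht : 1 ≤ t) (hd : 1 ≤ d) (hn : 0 < n)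
    (σ : Measure (Metric.sphere (0 : EuclideanSpace ℝ (Fin d)) 1))
    [IsProbabilityMeasure σ]
    (hinv : ∀ (e : EuclideanSpace ℝ (Fin d) ≃ₗᵢ[ℝ] EuclideanSpace ℝ (Fin d))
      (f : EuclideanSpace ℝ (Fin d) → ℝ),
      ∫ x, f (e ↑x) ∂σ = ∫ x, f ↑x ∂σ)
    (v : Fin n → EuclideanSpace ℝ (Fin d)) (hv : ∀ j, ‖v j‖ = 1) :
    (∑ j, ∑ k, (inner ℝ (v j) (v k) : ℝ) ^ (2 * t) =
        (∏ j ∈ Finset.range t, (2 * (j : ℝ) + 1) / ((d : ℝ) + 2 * j)) * (n : ℝ) ^ 2) ↔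
    (∀ p ∈ MvPolynomial.homogeneousSubmodule (Fin d) ℝ (2 * t),
      ∫ x, MvPolynomial.eval (fun i => (x : EuclideanSpace ℝ (Fin d)) i) p ∂σ =
        (1 / (n : ℝ)) * ∑ j, MvPolynomial.eval (fun i => v j i) p) := by
  classical
  have hd0 : 0 < d := hd
  have hn' : (n : ℝ) ≠ 0 := Nat.cast_ne_zero.mpr hn.ne'
  set c : ℝ := ∏ j ∈ Finset.range t, (2 * (j : ℝ) + 1) / ((d : ℝ) + 2 * j) with hc
  set S : (Fin (2 * t) → Fin d) → ℝ :=
    fun f => ∫ x, ∏ k, (x : Ed d) (f k) ∂σ with hS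
  set W : (Fin (2 * t) → Fin d) → ℝ :=
    fun f => ∑ j, ∏ k, v j (f k) with hW
  have hintS : ∀ f : Fin (2 * t) → Fin d,
      Integrable (fun x : Sph d => ∏ k, (x : Ed d) (f k)) σ :=
    fun f => integ σ (cont_prod f)
  -- the cross identity
  have hcross : ∀ u : Ed d, ‖u‖ = 1 → ∑ f, (∏ k, u (f k)) * S f = c := by
    intro u hu
    calc ∑ f, (∏ k, u (f k)) * S f
        = ∑ f : Fin (2 * t) → Fin d, ∫ x, (∏ k, u (f k)) * ∏ k, (x : Ed d) (f k) ∂σ :=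
          Finset.sum_congr rfl fun f _ => (integral_const_mul _ _).symm
      _ = ∫ x, ∑ f : Fin (2 * t) → Fin d, (∏ k, u (f k)) * ∏ k, (x : Ed d) (f k) ∂σ :=
          (integral_finset_sum _ fun f _ => (hintS f).const_mul _).symm
      _ = ∫ x, (inner ℝ (x : Ed d) u : ℝ) ^ (2 * t) ∂σ := by
          refine integral_congr_ae (Filter.Eventually.of_forall fun x => ?_)
          dsimp only
          rw [← inner_pow_expand, real_inner_comm]
      _ = c := inner_moment σ hinv hd0 t u hu
  have hWS : ∑ f, W f * S f = (n : ℝ) * c := by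
    calc ∑ f, W f * S f
        = ∑ f : Fin (2 * t) → Fin d, ∑ j, (∏ k, v j (f k)) * S f :=
          Finset.sum_congr rfl fun f _ => Finset.sum_mul _ _ _
      _ = ∑ j, ∑ f : Fin (2 * t) → Fin d, (∏ k, v j (f k)) * S f := Finset.sum_comm
      _ = ∑ _j : Fin n, c := Finset.sum_congr rfl fun j _ => hcross (v j) (hv j)
      _ = (n : ℝ) * c := by
          rw [Finset.sum_const, Finset.card_univ, Fintype.card_fin, nsmul_eq_mul]
  have hSS : ∑ f, S f * S f = c := by
    calc ∑ f, S f * S f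
        = ∑ f : Fin (2 * t) → Fin d, ∫ x, (∏ k, (x : Ed d) (f k)) * S f ∂σ :=
          Finset.sum_congr rfl fun f _ => by rw [integral_mul_const]
      _ = ∫ x, ∑ f : Fin (2 * t) → Fin d, (∏ k, (x : Ed d) (f k)) * S f ∂σ :=
          (integral_finset_sum _ fun f _ => (hintS f).mul_const _).symm
      _ = ∫ _x : Sph d, c ∂σ :=
          integral_congr_ae (Filter.Eventually.of_forall fun x =>
            hcross (x : Ed d) (norm_coe_sphere x))
      _ = c := by simp
  have hJK : ∑ j, ∑ k, (inner ℝ (v j) (v k) : ℝ) ^ (2 * t) = ∑ f, (W f) ^ 2 := by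
    calc ∑ j, ∑ k, (inner ℝ (v j) (v k) : ℝ) ^ (2 * t)
        = ∑ j, ∑ k, ∑ f : Fin (2 * t) → Fin d,
            (∏ kk, v j (f kk)) * (∏ kk, v k (f kk)) :=
          Finset.sum_congr rfl fun j _ => Finset.sum_congr rfl fun k _ =>
            inner_pow_expand _ _ _
      _ = ∑ j, ∑ f : Fin (2 * t) → Fin d, ∑ k,
            (∏ kk, v j (f kk)) * (∏ kk, v k (f kk)) :=
          Finset.sum_congr rfl fun j _ => Finset.sum_comm
      _ = ∑ f : Fin (2 * t) → Fin d, ∑ j, ∑ k,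
            (∏ kk, v j (f kk)) * (∏ kk, v k (f kk)) := Finset.sum_comm
      _ = ∑ f, (W f) * (W f) :=
          Finset.sum_congr rfl fun f _ => (Finset.sum_mul_sum _ _ _ _).symm
      _ = ∑ f, (W f) ^ 2 := Finset.sum_congr rfl fun f _ => (sq (W f)).symm
  -- the design condition is equivalent to W f = n * S f for all f
  have hkey : (∑ j, ∑ k, (inner ℝ (v j) (v k) : ℝ) ^ (2 * t) = c * (n : ℝ) ^ 2) ↔
      ∀ f : Fin (2 * t) → Fin d, W f = (n : ℝ) * S f := by
    rw [hJK]
    constructor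
    · intro h f
      have expand : ∑ f, (W f - (n : ℝ) * S f) ^ 2
          = ∑ f, (W f) ^ 2 - 2 * (n : ℝ) * (∑ f, W f * S f)
            + (n : ℝ) ^ 2 * (∑ f, S f * S f) := by
        rw [Finset.mul_sum, Finset.mul_sum, ← Finset.sum_sub_distrib, ← Finset.sum_add_distrib]
        exact Finset.sum_congr rfl fun f _ => by ring
      have hzero : ∑ f, (W f - (n : ℝ) * S f) ^ 2 = 0 := by
        rw [expand, hWS, hSS, h]; ring
      have hf := (Finset.sum_eq_zero_iff_of_nonneg
        (fun f _ => sq_nonneg _)).mp hzero f (Finset.mem_univ f)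
      have := (pow_eq_zero_iff two_ne_zero).mp hf
      linarith [this]
    · intro h
      calc ∑ f, (W f) ^ 2 = ∑ f, (n : ℝ) ^ 2 * (S f * S f) :=
            Finset.sum_congr rfl fun f _ => by rw [h f]; ring
        _ = (n : ℝ) ^ 2 * ∑ f, S f * S f := by rw [Finset.mul_sum]
        _ = c * (n : ℝ) ^ 2 := by rw [hSS]; ring
  rw [hkey]
  constructor
  · -- design ⇒ cubature
    intro h p hp
    have hhom : p.IsHomogeneous (2 * t) :=
      (MvPolynomial.mem_homogeneousSubmodule _ _).1 hp
    have hmono : ∀ α ∈ p.support,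
        ∫ x, MvPolynomial.coeff α p * ∏ i, ((x : Ed d) i) ^ (α i) ∂σ
          = (1 / (n : ℝ)) * ∑ j, MvPolynomial.coeff α p * ∏ i, (v j i) ^ (α i) := by
      intro α hα
      have hdeg : (α.sum fun _ e => e) = 2 * t := by
        have := hhom (MvPolynomial.mem_support_iff.mp hα)
        simpa [Finsupp.weight, Finsupp.sum, Finsupp.degree, Finsupp.linearCombination]
          using this
      obtain ⟨f, hf⟩ := exists_fn α hdeg
      calc ∫ x, MvPolynomial.coeff α p * ∏ i, ((x : Ed d) i) ^ (α i) ∂σ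
          = MvPolynomial.coeff α p * ∫ x, ∏ k, (x : Ed d) (f k) ∂σ := by
            rw [← integral_const_mul]
            refine integral_congr_ae (Filter.Eventually.of_forall fun x => ?_)
            dsimp only
            rw [hf ((↑x : Ed d))]
        _ = MvPolynomial.coeff α p * S f := rfl
        _ = MvPolynomial.coeff α p * ((1 / (n : ℝ)) * W f) := by
            rw [h f]; field_simp
        _ = (1 / (n : ℝ)) * ∑ j, MvPolynomial.coeff α p * ∏ i, (v j i) ^ (α i) := by
            have hrw : (∑ j, MvPolynomial.coeff α p * ∏ i, (v j i) ^ (α i))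
                = ∑ j, MvPolynomial.coeff α p * ∏ k, v j (f k) :=
              Finset.sum_congr rfl fun j _ => by rw [hf (v j)]
            rw [hrw, hW, mul_left_comm]
            congr 1
            rw [Finset.mul_sum]
    calc ∫ x, MvPolynomial.eval (fun i => (x : Ed d) i) p ∂σ
        = ∫ x, ∑ α ∈ p.support,
            MvPolynomial.coeff α p * ∏ i, ((x : Ed d) i) ^ (α i) ∂σ := by
          refine integral_congr_ae (Filter.Eventually.of_forall fun x => ?_)
          dsimp only
          rw [MvPolynomial.eval_eq']
      _ = ∑ α ∈ p.support, ∫ x, MvPolynomial.coeff α p * ∏ i, ((x : Ed d) i) ^ (α i) ∂σ :=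
          integral_finset_sum _ fun α _ =>
            (integ σ (continuous_finset_prod _ fun i _ => (cont_coord i).pow _)).const_mul _
      _ = ∑ α ∈ p.support, (1 / (n : ℝ)) * ∑ j, MvPolynomial.coeff α p
            * ∏ i, (v j i) ^ (α i) := Finset.sum_congr rfl hmono
      _ = (1 / (n : ℝ)) * ∑ α ∈ p.support, ∑ j, MvPolynomial.coeff α p
            * ∏ i, (v j i) ^ (α i) := by rw [Finset.mul_sum]
      _ = (1 / (n : ℝ)) * ∑ j, ∑ α ∈ p.support, MvPolynomial.coeff α p
            * ∏ i, (v j i) ^ (α i) := by rw [Finset.sum_comm]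
      _ = (1 / (n : ℝ)) * ∑ j, MvPolynomial.eval (fun i => v j i) p := by
          congr 1
          exact Finset.sum_congr rfl fun j _ => (MvPolynomial.eval_eq' _ _).symm
  · -- cubature ⇒ design
    intro h f
    have hpf : (∏ k, (MvPolynomial.X (f k) : MvPolynomial (Fin d) ℝ))
        ∈ MvPolynomial.homogeneousSubmodule (Fin d) ℝ (2 * t) := by
      rw [MvPolynomial.mem_homogeneousSubmodule]
      have := MvPolynomial.IsHomogeneous.prod Finset.univ
        (fun k : Fin (2 * t) => (MvPolynomial.X (f k) : MvPolynomial (Fin d) ℝ))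
        (fun _ => 1) (fun k _ => MvPolynomial.isHomogeneous_X ℝ (f k))
      simpa using this
    have hval := h _ hpf
    simp only [map_prod, MvPolynomial.eval_X] at hval
    have hSf : S f = ∫ x, ∏ k, (x : Ed d) (f k) ∂σ := rfl
    have hWf : W f = ∑ j, ∏ k, v j (f k) := rfl
    rw [hWf, hSf, hval]
    field_simp
end
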